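/- arXiv:2309.09849 — 3 statements merged into one kernel-verified Lean document; each statement's English description precedes it below -/
import Mathlib

section
/- Let G=(V,E) be a finite graph, m1,m2≥1 integers, p,q≥2, λ>0, h1,h2:V→(0,∞), and F:V×ℝ²→ℝ. Assume: (F0) for every x∈V the map (s,t)↦F(x,s,t) is continuously differentiable on ℝ²; (F1) ∑_{x∈V} μ(x)F(x,0,0)=0; (F2) there exist α∈[0,p), β∈[0,q) and functions f1,f2,g:V→ℝ with F(x,s,t) ≤ f1(x)|s|^α + f2(x)|t|^β + g(x) for all (x,s,t)∈V×ℝ²; (F3) there exist γ1,γ2,δ1,δ2>0 with δ1>γ1κ1 and δ2>γ2κ2, where κ1=((1/p)∫_V h1 dμ)^{-1/p} and κ2=((1/q)∫_V h2 dμ)^{-1/q}, such that Λ1<Λ2, where Λ1 = (γ1^p+γ2^q)^{-1}·(max{F(x,s,t) : x∈V, |s| ≤ (p(γ1^p+γ2^q))^{1/p}/(h_{1,min}^{1/p}·μ_min^{1/p}), |t| ≤ (q(γ1^p+γ2^q))^{1/q}/(h_{2,min}^{1/q}·μ_min^{1/q})})·|V| and Λ2 = (min_{x∈V}F(x,δ1,δ2))·|V|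 / ((δ1^p/p)∫_V h1 dμ + (δ2^q/q)∫_V h2 dμ). Then for every λ>0 with λ·Λ2 > 1 and λ·Λ1 < 1, the system 𝓛_{m1,p}u + h1|u|^{p−2}u = λF_s(x,u,v), 𝓛_{m2,q}v + h2|v|^{q−2}v = λF_t(x,u,v) has at least three pairwise distinct solutions (u,v). -/
open Real
set_option linter.unusedSectionVars false
set_option linter.unusedVariables false
set_option maxHeartbeats 1000000

noncomputable section

variable {V : Type*}

/-- Integral on a finite graph: `∫_V u dμ = ∑_{x∈V} μ(x) u(x)`. -/
def intV [Fintype V] (μ u : V → ℝ) : ℝ := ∑ x, μ x * u x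

/-- Graph Laplacian. -/
def glap [Fintype V] (w : V → V → ℝ) (μ : V → ℝ) (u : V → ℝ) (x : V) : ℝ :=
  (1 / μ x) * ∑ y, w x y * (u y - u x)

/-- The bilinear form Γ. -/
def ggam [Fintype V] (w : V → V → ℝ) (μ : V → ℝ) (u v : V → ℝ) (x : V) : ℝ :=
  (1 / (2 * μ x)) * ∑ y, w x y * (u y - u x) * (v y - v x)

/-- Length of the gradient: `|∇u|(x) = √(Γ(u,u)(x))`. -/
def gnorm [Fintype V] (w : V → V → ℝ) (μ : V → ℝ) (u : V → ℝ) (x : V) : ℝ :=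
  Real.sqrt (ggam w μ u u x)

/-- The length `|∇^m u|` of the m-th order gradient. -/
def gradm [Fintype V] (w : V → V → ℝ) (μ : V → ℝ) (m : ℕ) (u : V → ℝ) (x : V) : ℝ :=
  if m % 2 = 1 then gnorm w μ ((glap w μ)^[(m - 1) / 2] u) x
  else |((glap w μ)^[m / 2] u) x|

/-- The Sobolev norm `‖u‖_{W^{m,l}}` (with weight `h`). -/
def wnorm [Fintype V] (w : V → V → ℝ) (μ h : V → ℝ) (m : ℕ) (l : ℝ) (u : V → ℝ) : ℝ :=
  (intV μ (fun x => gradm w μ m u x ^ l + h x * |u x| ^ l)) ^ (1 / l)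

/-- min of a function over the (nonempty finite) vertex set. -/
def fmin [Fintype V] [Nonempty V] (f : V → ℝ) : ℝ :=
  Finset.univ.inf' Finset.univ_nonempty f

/-- max of a function over the (nonempty finite) vertex set. -/
def fmax [Fintype V] [Nonempty V] (f : V → ℝ) : ℝ :=
  Finset.univ.sup' Finset.univ_nonempty f

/-- The poly-Laplacian pairing `B_{m,p}(u,φ)`. -/
def Bmp [Fintype V] (w : V → V → ℝ) (μ : V → ℝ) (m : ℕ) (p : ℝ) (u φ : V → ℝ) : ℝ :=
  if m % 2 = 1 then
    intV μ (fun x => gradm w μ m u x ^ (p - 2) *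
      ggam w μ ((glap w μ)^[(m - 1) / 2] u) ((glap w μ)^[(m - 1) / 2] φ) x)
  else
    intV μ (fun x => gradm w μ m u x ^ (p - 2) *
      ((glap w μ)^[m / 2] u x) * ((glap w μ)^[m / 2] φ x))

end

noncomputable section
variable {V : Type*}

/-- `(u,v)` is a (weak) solution of the poly-Laplacian system
`𝓛_{m1,p}u + h1|u|^{p−2}u = λ F_s(x,u,v)`, `𝓛_{m2,q}v + h2|v|^{q−2}v = λ F_t(x,u,v)`. -/
def isSolSys [Fintype V] (w : V → V → ℝ) (μ h1 h2 : V → ℝ) (m1 m2 : ℕ)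
    (p q lam : ℝ) (Fs Ft : V → ℝ → ℝ → ℝ) (u v : V → ℝ) : Prop :=
  ∀ φ1 φ2 : V → ℝ,
    Bmp w μ m1 p u φ1 + intV μ (fun x => h1 x * |u x| ^ (p - 2) * u x * φ1 x) =
      lam * intV μ (fun x => Fs x (u x) (v x) * φ1 x) ∧
    Bmp w μ m2 q v φ2 + intV μ (fun x => h2 x * |v x| ^ (q - 2) * v x * φ2 x) =
      lam * intV μ (fun x => Ft x (u x) (v x) * φ2 x)

end

noncomputable section MPaux
namespace MPaux

variable {V : Type*} [Fintype V] [Nonempty V]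
variable (w : V → V → ℝ) (μ : V → ℝ)

lemma glap_lin (f g : V → ℝ) (c : ℝ) :
    glap w μ (f + c • g) = glap w μ f + c • glap w μ g := by
  funext x
  simp only [glap, Pi.add_apply, Pi.smul_apply, smul_eq_mul]
  have h : ∀ y, w x y * ((f y + c * g y) - (f x + c * g x)) =
      w x y * (f y - f x) + c * (w x y * (g y - g x)) := by intro y; ring
  rw [Finset.sum_congr rfl fun y _ => h y, Finset.sum_add_distrib, ← Finset.mul_sum]
  ring

lemma glap_zero : glap w μ (0 : V → ℝ) = 0 := by
  funext x; simp [glap]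

lemma glapIter_lin (k : ℕ) (f g : V → ℝ) (c : ℝ) :
    (glap w μ)^[k] (f + c • g) = (glap w μ)^[k] f + c • (glap w μ)^[k] g := by
  induction k with
  | zero => simp
  | succ n ih =>
      rw [Function.iterate_succ_apply', ih, glap_lin, Function.iterate_succ_apply',
        Function.iterate_succ_apply']

lemma glapIter_zero (k : ℕ) : (glap w μ)^[k] (0 : V → ℝ) = 0 := by
  induction k with
  | zero => rfl
  | succ n ih => rw [Function.iterate_succ_apply, glap_zero, ih]

lemma glapIter_const (k : ℕ) (hk : 1 ≤ k) (c : ℝ) :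
    (glap w μ)^[k] (fun _ => c) = 0 := by
  obtain ⟨n, rfl⟩ := Nat.exists_eq_add_of_le hk
  rw [add_comm, Function.iterate_succ_apply]
  have : glap w μ (fun _ => c) = 0 := by funext x; simp [glap]
  rw [this, glapIter_zero]

lemma ggam_add_right (f g₁ g₂ : V → ℝ) (x : V) :
    ggam w μ f (g₁ + g₂) x = ggam w μ f g₁ x + ggam w μ f g₂ x := by
  simp only [ggam, Pi.add_apply]
  have h : ∀ y, w x y * (f y - f x) * ((g₁ y + g₂ y) - (g₁ x + g₂ x)) =
      w x y * (f y - f x) * (g₁ y - g₁ x) + w x y * (f y - f x) * (g₂ y - g₂ x) := by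
    intro y; ring
  rw [Finset.sum_congr rfl fun y _ => h y, Finset.sum_add_distrib]
  ring

lemma ggam_smul_right (f g : V → ℝ) (c : ℝ) (x : V) :
    ggam w μ f (c • g) x = c * ggam w μ f g x := by
  simp only [ggam, Pi.smul_apply, smul_eq_mul]
  have h : ∀ y, w x y * (f y - f x) * ((c * g y) - (c * g x)) =
      c * (w x y * (f y - f x) * (g y - g x)) := by intro y; ring
  rw [Finset.sum_congr rfl fun y _ => h y, ← Finset.mul_sum]
  ring

lemma ggam_comm (f g : V → ℝ) (x : V) : ggam w μ f g x = ggam w μ g f x := by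
  simp only [ggam]
  congr 1
  exact Finset.sum_congr rfl fun y _ => by ring

lemma ggam_zero_right (f : V → ℝ) (x : V) : ggam w μ f (0 : V → ℝ) x = 0 := by
  simp [ggam]

lemma ggam_line (a b : V → ℝ) (t : ℝ) (x : V) :
    ggam w μ (a + t • b) b x = ggam w μ a b x + t * ggam w μ b b x := by
  rw [ggam_comm, ggam_add_right, ggam_smul_right, ggam_comm w μ a b]

lemma ggam_expand (a b : V → ℝ) (s : ℝ) (x : V) :
    ggam w μ (a + s • b) (a + s • b) x =
      ggam w μ a a x + (2 * ggam w μ a b x) * s + ggam w μ b b x * s ^ 2 := by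
  rw [ggam_add_right, ggam_smul_right, ggam_comm w μ (a + s • b) a, ggam_add_right,
    ggam_smul_right, ggam_line]
  ring

lemma ggam_self_nonneg (hw : ∀ x y, 0 ≤ w x y) (hμ : ∀ x, 0 < μ x) (f : V → ℝ) (x : V) :
    0 ≤ ggam w μ f f x := by
  unfold ggam
  apply mul_nonneg
  · have := hμ x; positivity
  · apply Finset.sum_nonneg
    intro y _
    have : w x y * (f y - f x) * (f y - f x) = w x y * (f y - f x) ^ 2 := by ring
    rw [this]
    have := hw x y
    positivity

lemma gradm_nonneg (m : ℕ) (u : V → ℝ) (x : V) : 0 ≤ gradm w μ m u x := by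
  unfold gradm
  split
  · exact Real.sqrt_nonneg _
  · exact abs_nonneg _

lemma gradm_const_eq_zero (m : ℕ) (hm : 1 ≤ m) (c : ℝ) (x : V) :
    gradm w μ m (fun _ => c) x = 0 := by
  unfold gradm
  split
  · rcases Nat.eq_zero_or_pos ((m - 1) / 2) with h | h
    · rw [h]
      simp only [Function.iterate_zero, id_eq]
      unfold gnorm
      have : ggam w μ (fun _ => c) (fun _ => c) x = 0 := by simp [ggam]
      rw [this, Real.sqrt_zero]
    · rw [glapIter_const w μ _ h]
      unfold gnorm
      rw [show ggam w μ (0 : V → ℝ) (0:V→ℝ) x = 0 by simp [ggam], Real.sqrt_zero]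
  · rename_i hodd
    have h2 : m % 2 = 0 := by omega
    have : 1 ≤ m / 2 := by omega
    rw [glapIter_const w μ _ this]
    simp

lemma gradm_zero_eq_zero (m : ℕ) (hm : 1 ≤ m) (x : V) :
    gradm w μ m (0 : V → ℝ) x = 0 := by
  have : (0 : V → ℝ) = fun _ => (0:ℝ) := rfl
  rw [this, gradm_const_eq_zero w μ m hm]

end MPaux
end MPaux

noncomputable section MPaux2
namespace MPaux
open MPaux

variable {V : Type*} [Fintype V] [Nonempty V]
variable (w : V → V → ℝ) (μ : V → ℝ)

def Bmp' (w : V → V → ℝ) (μ : V → ℝ) (m : ℕ) (p : ℝ) (u φ : V → ℝ) : ℝ :=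
  if m % 2 = 1 then
    intV μ (fun x => gradm w μ m u x ^ (p - 2) *
      ggam w μ ((glap w μ)^[(m - 1) / 2] u) ((glap w μ)^[(m - 1) / 2] φ) x)
  else
    intV μ (fun x => gradm w μ m u x ^ (p - 2) *
      ((glap w μ)^[m / 2] u x) * ((glap w μ)^[m / 2] φ x))

lemma sqrt_rpow_helper (r c : ℝ) (hr : 0 ≤ r) : Real.sqrt r ^ c = r ^ (c / 2) := by
  rw [Real.sqrt_eq_rpow, ← Real.rpow_mul hr]
  congr 1
  ring

lemma abs_rpow_helper (y c : ℝ) : |y| ^ c = (y * y) ^ (c / 2) := by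
  rw [show y * y = |y| * |y| from (abs_mul_abs_self y).symm,
    show |y| * |y| = |y| ^ (2:ℝ) by
      rw [show (2:ℝ) = ((2:ℕ):ℝ) by norm_num, Real.rpow_natCast]; ring,
    ← Real.rpow_mul (abs_nonneg y)]
  congr 1
  ring

lemma hasDerivAt_quad (c0 c1 c2 t : ℝ) :
    HasDerivAt (fun s => c0 + c1 * s + c2 * s ^ 2) (c1 + c2 * (2 * t)) t := by
  have h1 : HasDerivAt (fun s : ℝ => c1 * s) c1 t := by
    simpa using (hasDerivAt_id t).const_mul c1
  have h2 : HasDerivAt (fun s : ℝ => c2 * s ^ 2) (c2 * (2 * t)) t := by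
    have := (hasDerivAt_pow 2 t).const_mul c2
    simpa [mul_comm, mul_assoc] using this
  simpa using ((hasDerivAt_const t c0).fun_add h1).fun_add h2

lemma hasDerivAt_gradm_pow_odd (hw : ∀ x y, 0 ≤ w x y) (hμ : ∀ x, 0 < μ x)
    {m : ℕ} {p : ℝ} (hp : 2 ≤ p) (hm : m % 2 = 1) (u φ : V → ℝ) (x : V) (t : ℝ) :
    HasDerivAt (fun s => gradm w μ m (u + s • φ) x ^ p)
      (p * (gradm w μ m (u + t • φ) x ^ (p - 2) *
        ggam w μ ((glap w μ)^[(m - 1) / 2] (u + t • φ)) ((glap w μ)^[(m - 1) / 2] φ) x)) t := by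
  set a := (glap w μ)^[(m - 1) / 2] u with ha
  set b := (glap w μ)^[(m - 1) / 2] φ with hb
  have hL : ∀ s : ℝ, (glap w μ)^[(m - 1) / 2] (u + s • φ) = a + s • b :=
    fun s => glapIter_lin w μ _ u φ s
  have hgr : ∀ s : ℝ, gradm w μ m (u + s • φ) x = Real.sqrt (ggam w μ (a + s • b) (a + s • b) x) := by
    intro s; unfold gradm gnorm; rw [if_pos hm, hL]
  have hfun : (fun s => gradm w μ m (u + s • φ) x ^ p) =
      fun s => (ggam w μ a a x + (2 * ggam w μ a b x) * s + ggam w μ b b x * s ^ 2) ^ (p / 2) := by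
    funext s
    rw [hgr, sqrt_rpow_helper _ _ (ggam_self_nonneg w μ hw hμ _ x), ggam_expand]
  rw [hfun]
  have hQ : HasDerivAt (fun s => ggam w μ a a x + (2 * ggam w μ a b x) * s + ggam w μ b b x * s ^ 2)
      (2 * ggam w μ a b x + ggam w μ b b x * (2 * t)) t := hasDerivAt_quad _ _ _ t
  have hrp : HasDerivAt (fun y : ℝ => y ^ (p / 2))
      (p / 2 * (ggam w μ a a x + (2 * ggam w μ a b x) * t + ggam w μ b b x * t ^ 2) ^ (p / 2 - 1))
      (ggam w μ a a x + (2 * ggam w μ a b x) * t + ggam w μ b b x * t ^ 2) :=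
    Real.hasDerivAt_rpow_const (Or.inr (by linarith))
  have hcomp := hrp.comp t hQ
  refine hcomp.congr_deriv ?_
  symm
  have e1 : gradm w μ m (u + t • φ) x ^ (p - 2) =
      (ggam w μ a a x + (2 * ggam w μ a b x) * t + ggam w μ b b x * t ^ 2) ^ ((p - 2) / 2) := by
    rw [hgr, sqrt_rpow_helper _ _ (ggam_self_nonneg w μ hw hμ _ x), ggam_expand]
  have e2 : ggam w μ ((glap w μ)^[(m - 1) / 2] (u + t • φ)) b x =
      ggam w μ a b x + t * ggam w μ b b x := by rw [hL, ggam_line]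
  rw [e1, e2, show p / 2 - 1 = (p - 2) / 2 by ring]
  ring

lemma hasDerivAt_abs_rpow {p : ℝ} (hp : 2 ≤ p) (a b t : ℝ) :
    HasDerivAt (fun s => |a + s * b| ^ p)
      (p * (|a + t * b| ^ (p - 2) * (a + t * b) * b)) t := by
  have hfun : (fun s => |a + s * b| ^ p) =
      fun s => (a * a + (2 * (a * b)) * s + b * b * s ^ 2) ^ (p / 2) := by
    funext s
    rw [abs_rpow_helper]
    congr 1
    ring
  rw [hfun]
  have hQ := hasDerivAt_quad (a * a) (2 * (a * b)) (b * b) t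
  have hrp : HasDerivAt (fun y : ℝ => y ^ (p / 2))
      (p / 2 * (a * a + (2 * (a * b)) * t + b * b * t ^ 2) ^ (p / 2 - 1))
      (a * a + (2 * (a * b)) * t + b * b * t ^ 2) :=
    Real.hasDerivAt_rpow_const (Or.inr (by linarith))
  have hcomp := hrp.comp t hQ
  refine hcomp.congr_deriv ?_
  symm
  have e1 : |a + t * b| ^ (p - 2) = (a * a + (2 * (a * b)) * t + b * b * t ^ 2) ^ ((p - 2) / 2) := by
    rw [abs_rpow_helper]
    congr 1
    ring
  rw [e1, show p / 2 - 1 = (p - 2) / 2 by ring]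
  ring

lemma hasDerivAt_gradm_pow_even {m : ℕ} {p : ℝ} (hp : 2 ≤ p) (hm : ¬ m % 2 = 1)
    (u φ : V → ℝ) (x : V) (t : ℝ) :
    HasDerivAt (fun s => gradm w μ m (u + s • φ) x ^ p)
      (p * (gradm w μ m (u + t • φ) x ^ (p - 2) *
        ((glap w μ)^[m / 2] (u + t • φ) x) * ((glap w μ)^[m / 2] φ x))) t := by
  set a := (glap w μ)^[m / 2] u with ha
  set b := (glap w μ)^[m / 2] φ with hb
  have hL : ∀ s : ℝ, (glap w μ)^[m / 2] (u + s • φ) = a + s • b :=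
    fun s => glapIter_lin w μ _ u φ s
  have hgr : ∀ s : ℝ, gradm w μ m (u + s • φ) x = |a x + s * b x| := by
    intro s; unfold gradm; rw [if_neg hm, hL]; simp
  have hfun : (fun s => gradm w μ m (u + s • φ) x ^ p) = fun s => |a x + s * b x| ^ p := by
    funext s; rw [hgr]
  rw [hfun]
  have h := hasDerivAt_abs_rpow hp (a x) (b x) t
  convert h using 1
  rw [hgr, hL]
  simp only [Pi.add_apply, Pi.smul_apply, smul_eq_mul]

end MPaux
end MPaux2

noncomputable section MPaux3
namespace MPaux

variable {V : Type*} [Fintype V] [Nonempty V]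

lemma hasDerivAt_block (w : V → V → ℝ) (μ : V → ℝ) (hw : ∀ x y, 0 ≤ w x y)
    (hμ : ∀ x, 0 < μ x) {m : ℕ} {p : ℝ} (hm : 1 ≤ m) (hp : 2 ≤ p)
    (h : V → ℝ) (u φ : V → ℝ) (t : ℝ) :
    HasDerivAt
      (fun s => (1 / p) * intV μ (fun x => gradm w μ m (u + s • φ) x ^ p + h x * |u x + s * φ x| ^ p))
      (Bmp' w μ m p (u + t • φ) φ +
        intV μ (fun x => h x * |u x + t * φ x| ^ (p - 2) * (u x + t * φ x) * φ x)) t := by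
  have hp0 : p ≠ 0 := by linarith
  -- gradient part per x
  have hgrad : ∀ x : V, HasDerivAt (fun s => gradm w μ m (u + s • φ) x ^ p)
      (p * (if m % 2 = 1 then
          gradm w μ m (u + t • φ) x ^ (p - 2) *
            ggam w μ ((glap w μ)^[(m - 1) / 2] (u + t • φ)) ((glap w μ)^[(m - 1) / 2] φ) x
        else
          gradm w μ m (u + t • φ) x ^ (p - 2) *
            ((glap w μ)^[m / 2] (u + t • φ) x) * ((glap w μ)^[m / 2] φ x))) t := by
    intro x
    by_cases hmo : m % 2 = 1
    · rw [if_pos hmo]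
      exact hasDerivAt_gradm_pow_odd w μ hw hμ hp hmo u φ x t
    · rw [if_neg hmo]
      exact hasDerivAt_gradm_pow_even w μ hp hmo u φ x t
  have habs : ∀ x : V, HasDerivAt (fun s => h x * |u x + s * φ x| ^ p)
      (h x * (p * (|u x + t * φ x| ^ (p - 2) * (u x + t * φ x) * φ x))) t :=
    fun x => (hasDerivAt_abs_rpow hp (u x) (φ x) t).const_mul (h x)
  have hsum : HasDerivAt
      (fun s => ∑ x, μ x * (gradm w μ m (u + s • φ) x ^ p + h x * |u x + s * φ x| ^ p))
      (∑ x, μ x * ((p * (if m % 2 = 1 then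
          gradm w μ m (u + t • φ) x ^ (p - 2) *
            ggam w μ ((glap w μ)^[(m - 1) / 2] (u + t • φ)) ((glap w μ)^[(m - 1) / 2] φ) x
        else
          gradm w μ m (u + t • φ) x ^ (p - 2) *
            ((glap w μ)^[m / 2] (u + t • φ) x) * ((glap w μ)^[m / 2] φ x))) +
        h x * (p * (|u x + t * φ x| ^ (p - 2) * (u x + t * φ x) * φ x)))) t := by
    apply HasDerivAt.fun_sum
    intro x _
    exact (((hgrad x).add (habs x)).const_mul (μ x))
  have := hsum.const_mul (1 / p)
  unfold intV
  refine this.congr_deriv ?_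
  symm
  unfold Bmp' intV
  by_cases hmo : m % 2 = 1
  · rw [if_pos hmo]
    simp only [if_pos hmo]
    rw [← Finset.sum_add_distrib, Finset.mul_sum]
    apply Finset.sum_congr rfl
    intro x _
    field_simp
  · rw [if_neg hmo]
    simp only [if_neg hmo]
    rw [← Finset.sum_add_distrib, Finset.mul_sum]
    apply Finset.sum_congr rfl
    intro x _
    field_simp

lemma hasDerivAt_F_line (F Fs Ft : V → ℝ → ℝ → ℝ)
    (hF0 : ∀ x, ContDiff ℝ 1 (fun st : ℝ × ℝ => F x st.1 st.2))
    (hFs : ∀ x s t, HasDerivAt (fun z => F x z t) (Fs x s t) s)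
    (hFt : ∀ x s t, HasDerivAt (fun z => F x s z) (Ft x s t) t)
    (x : V) (s0 t0 ds dt τ : ℝ) :
    HasDerivAt (fun τ' => F x (s0 + τ' * ds) (t0 + τ' * dt))
      (Fs x (s0 + τ * ds) (t0 + τ * dt) * ds + Ft x (s0 + τ * ds) (t0 + τ * dt) * dt) τ := by
  set f : ℝ × ℝ → ℝ := fun st => F x st.1 st.2 with hf
  set P : ℝ × ℝ := (s0 + τ * ds, t0 + τ * dt) with hP
  have hdiff : HasFDerivAt f (fderiv ℝ f P) P :=
    (((hF0 x).differentiable one_ne_zero) P).hasFDerivAt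
  have hγ : HasDerivAt (fun τ' : ℝ => ((s0 + τ' * ds, t0 + τ' * dt) : ℝ × ℝ)) (ds, dt) τ :=
    ((hasDerivAt_mul_const ds).const_add s0).prodMk ((hasDerivAt_mul_const dt).const_add t0)
  have hcomp : HasDerivAt (fun τ' => F x (s0 + τ' * ds) (t0 + τ' * dt))
      (fderiv ℝ f P (ds, dt)) τ := by have := hdiff.comp_hasDerivAt τ hγ; exact this
  -- identify the partials
  have hA : fderiv ℝ f P (1, 0) = Fs x P.1 P.2 := by
    have hc1 : HasDerivAt (fun τ' : ℝ => ((P.1 + τ', P.2) : ℝ × ℝ)) (1, 0) 0 :=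
      (((hasDerivAt_id (0:ℝ)).const_add P.1)).prodMk (hasDerivAt_const 0 P.2)
    have hdiff' : HasFDerivAt f (fderiv ℝ f P) ((P.1 + 0, P.2) : ℝ × ℝ) := by simpa using hdiff
    have h1 : HasDerivAt (fun τ' => F x (P.1 + τ') P.2) (fderiv ℝ f P (1, 0)) 0 :=
      by have := hdiff'.comp_hasDerivAt 0 hc1; exact this
    have h2 : HasDerivAt (fun τ' => F x (P.1 + τ') P.2) (Fs x P.1 P.2) 0 :=
      HasDerivAt.comp_const_add P.1 0 (by simpa using hFs x P.1 P.2)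
    exact h1.unique h2
  have hB : fderiv ℝ f P (0, 1) = Ft x P.1 P.2 := by
    have hc1 : HasDerivAt (fun τ' : ℝ => ((P.1, P.2 + τ') : ℝ × ℝ)) (0, 1) 0 :=
      (hasDerivAt_const 0 P.1).prodMk ((hasDerivAt_id (0:ℝ)).const_add P.2)
    have hdiff' : HasFDerivAt f (fderiv ℝ f P) ((P.1, P.2 + 0) : ℝ × ℝ) := by simpa using hdiff
    have h1 : HasDerivAt (fun τ' => F x P.1 (P.2 + τ')) (fderiv ℝ f P (0, 1)) 0 :=
      by have := hdiff'.comp_hasDerivAt 0 hc1; exact this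
    have h2 : HasDerivAt (fun τ' => F x P.1 (P.2 + τ')) (Ft x P.1 P.2) 0 :=
      HasDerivAt.comp_const_add P.2 0 (by simpa using hFt x P.1 P.2)
    exact h1.unique h2
  have hdec : ((ds, dt) : ℝ × ℝ) = ds • ((1, 0) : ℝ × ℝ) + dt • ((0, 1) : ℝ × ℝ) := by
    simp [Prod.ext_iff]
  convert hcomp using 1
  rw [hdec, map_add, map_smul, map_smul, hA, hB]
  simp [smul_eq_mul]
  ring

end MPaux
end MPaux3

noncomputable section MPaux4
namespace MPaux

variable {V : Type*} [Fintype V] [Nonempty V]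

def PhiF (w : V → V → ℝ) (μ h1 h2 : V → ℝ) (m1 m2 : ℕ) (p q : ℝ)
    (z : (V → ℝ) × (V → ℝ)) : ℝ :=
  (1 / p) * intV μ (fun x => gradm w μ m1 z.1 x ^ p + h1 x * |z.1 x| ^ p) +
  (1 / q) * intV μ (fun x => gradm w μ m2 z.2 x ^ q + h2 x * |z.2 x| ^ q)

def PsiF (μ : V → ℝ) (F : V → ℝ → ℝ → ℝ) (z : (V → ℝ) × (V → ℝ)) : ℝ :=
  intV μ (fun x => F x (z.1 x) (z.2 x))

def EJ (w : V → V → ℝ) (μ h1 h2 : V → ℝ) (m1 m2 : ℕ) (p q lam : ℝ)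
    (F : V → ℝ → ℝ → ℝ) (z : (V → ℝ) × (V → ℝ)) : ℝ :=
  PhiF w μ h1 h2 m1 m2 p q z - lam * PsiF μ F z

def DJ (w : V → V → ℝ) (μ h1 h2 : V → ℝ) (m1 m2 : ℕ) (p q lam : ℝ)
    (Fs Ft : V → ℝ → ℝ → ℝ) (z ξ : (V → ℝ) × (V → ℝ)) : ℝ :=
  (Bmp' w μ m1 p z.1 ξ.1 + intV μ (fun x => h1 x * |z.1 x| ^ (p - 2) * z.1 x * ξ.1 x)) +
  (Bmp' w μ m2 q z.2 ξ.2 + intV μ (fun x => h2 x * |z.2 x| ^ (q - 2) * z.2 x * ξ.2 x)) -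
  lam * intV μ (fun x => Fs x (z.1 x) (z.2 x) * ξ.1 x + Ft x (z.1 x) (z.2 x) * ξ.2 x)

lemma hasDerivAt_EJ (w : V → V → ℝ) (μ h1 h2 : V → ℝ) (m1 m2 : ℕ) (p q lam : ℝ)
    (F Fs Ft : V → ℝ → ℝ → ℝ)
    (hw : ∀ x y, 0 ≤ w x y) (hμ : ∀ x, 0 < μ x)
    (hm1 : 1 ≤ m1) (hm2 : 1 ≤ m2) (hp : 2 ≤ p) (hq : 2 ≤ q)
    (hF0 : ∀ x, ContDiff ℝ 1 (fun st : ℝ × ℝ => F x st.1 st.2))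
    (hFs : ∀ x s t, HasDerivAt (fun z => F x z t) (Fs x s t) s)
    (hFt : ∀ x s t, HasDerivAt (fun z => F x s z) (Ft x s t) t)
    (z ξ : (V → ℝ) × (V → ℝ)) (t : ℝ) :
    HasDerivAt (fun s => EJ w μ h1 h2 m1 m2 p q lam F (z + s • ξ))
      (DJ w μ h1 h2 m1 m2 p q lam Fs Ft (z + t • ξ) ξ) t := by
  have hb1 := hasDerivAt_block w μ hw hμ hm1 hp h1 z.1 ξ.1 t
  have hb2 := hasDerivAt_block w μ hw hμ hm2 hq h2 z.2 ξ.2 t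
  have hpsi : HasDerivAt
      (fun s => ∑ x, μ x * F x (z.1 x + s * ξ.1 x) (z.2 x + s * ξ.2 x))
      (∑ x, μ x * (Fs x (z.1 x + t * ξ.1 x) (z.2 x + t * ξ.2 x) * ξ.1 x +
        Ft x (z.1 x + t * ξ.1 x) (z.2 x + t * ξ.2 x) * ξ.2 x)) t := by
    apply HasDerivAt.fun_sum
    intro x _
    exact (hasDerivAt_F_line F Fs Ft hF0 hFs hFt x (z.1 x) (z.2 x) (ξ.1 x) (ξ.2 x) t).const_mul (μ x)
  have key := (hb1.add hb2).sub (hpsi.const_mul lam)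
  have hfe : (fun s => EJ w μ h1 h2 m1 m2 p q lam F (z + s • ξ)) =
      (fun s =>
        ((1 / p) * intV μ (fun x => gradm w μ m1 (z.1 + s • ξ.1) x ^ p + h1 x * |z.1 x + s * ξ.1 x| ^ p) +
         (1 / q) * intV μ (fun x => gradm w μ m2 (z.2 + s • ξ.2) x ^ q + h2 x * |z.2 x + s * ξ.2 x| ^ q)) -
        lam * ∑ x, μ x * F x (z.1 x + s * ξ.1 x) (z.2 x + s * ξ.2 x)) := by
    funext s
    simp only [EJ, PhiF, PsiF, intV, Prod.fst_add, Prod.snd_add, Prod.smul_fst, Prod.smul_snd,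
      Pi.add_apply, Pi.smul_apply, smul_eq_mul]
  rw [hfe]
  exact key.congr_deriv rfl

end MPaux
end MPaux4

noncomputable section MPaux5
namespace MPaux

variable {V : Type*} [Fintype V] [Nonempty V]
variable (w : V → V → ℝ) (μ : V → ℝ)

lemma glapIter_smul (k : ℕ) (c : ℝ) (φ : V → ℝ) :
    (glap w μ)^[k] (c • φ) = c • (glap w μ)^[k] φ := by
  have := glapIter_lin w μ k 0 φ c
  simpa [glapIter_zero] using this

lemma glapIter_add (k : ℕ) (φ ψ : V → ℝ) :
    (glap w μ)^[k] (φ + ψ) = (glap w μ)^[k] φ + (glap w μ)^[k] ψ := by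
  have := glapIter_lin w μ k φ ψ 1
  simpa using this

lemma Bmp'_add_right (m : ℕ) (p : ℝ) (u φ ψ : V → ℝ) :
    Bmp' w μ m p u (φ + ψ) = Bmp' w μ m p u φ + Bmp' w μ m p u ψ := by
  unfold Bmp' intV
  by_cases hm : m % 2 = 1
  · simp only [if_pos hm, glapIter_add, ggam_add_right, ← Finset.sum_add_distrib]
    exact Finset.sum_congr rfl fun x _ => by ring
  · simp only [if_neg hm, glapIter_add, Pi.add_apply, ← Finset.sum_add_distrib]
    exact Finset.sum_congr rfl fun x _ => by ring

lemma Bmp'_smul_right (m : ℕ) (p : ℝ) (u φ : V → ℝ) (c : ℝ) :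
    Bmp' w μ m p u (c • φ) = c * Bmp' w μ m p u φ := by
  unfold Bmp' intV
  by_cases hm : m % 2 = 1
  · simp only [if_pos hm, glapIter_smul, ggam_smul_right, Finset.mul_sum]
    exact Finset.sum_congr rfl fun x _ => by ring
  · simp only [if_neg hm, glapIter_smul, Pi.smul_apply, smul_eq_mul, Finset.mul_sum]
    exact Finset.sum_congr rfl fun x _ => by ring

lemma Bmp'_zero_right (m : ℕ) (p : ℝ) (u : V → ℝ) :
    Bmp' w μ m p u 0 = 0 := by
  have := Bmp'_smul_right w μ m p u 0 (0 : ℝ)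
  simpa using this

variable (h1 h2 : V → ℝ) (m1 m2 : ℕ) (p q lam : ℝ) (Fs Ft : V → ℝ → ℝ → ℝ)

lemma DJ_add_right (z ξ η : (V → ℝ) × (V → ℝ)) :
    DJ w μ h1 h2 m1 m2 p q lam Fs Ft z (ξ + η) =
      DJ w μ h1 h2 m1 m2 p q lam Fs Ft z ξ + DJ w μ h1 h2 m1 m2 p q lam Fs Ft z η := by
  unfold DJ
  rw [Prod.fst_add, Prod.snd_add, Bmp'_add_right, Bmp'_add_right]
  have e1 : intV μ (fun x => h1 x * |z.1 x| ^ (p - 2) * z.1 x * ((ξ.1 + η.1) x)) =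
      intV μ (fun x => h1 x * |z.1 x| ^ (p - 2) * z.1 x * ξ.1 x) +
      intV μ (fun x => h1 x * |z.1 x| ^ (p - 2) * z.1 x * η.1 x) := by
    unfold intV
    rw [← Finset.sum_add_distrib]
    exact Finset.sum_congr rfl fun x _ => by simp only [Pi.add_apply]; ring
  have e2 : intV μ (fun x => h2 x * |z.2 x| ^ (q - 2) * z.2 x * ((ξ.2 + η.2) x)) =
      intV μ (fun x => h2 x * |z.2 x| ^ (q - 2) * z.2 x * ξ.2 x) +
      intV μ (fun x => h2 x * |z.2 x| ^ (q - 2) * z.2 x * η.2 x) := by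
    unfold intV
    rw [← Finset.sum_add_distrib]
    exact Finset.sum_congr rfl fun x _ => by simp only [Pi.add_apply]; ring
  have eF : intV μ (fun x => Fs x (z.1 x) (z.2 x) * ((ξ.1 + η.1) x) +
        Ft x (z.1 x) (z.2 x) * ((ξ.2 + η.2) x)) =
      intV μ (fun x => Fs x (z.1 x) (z.2 x) * ξ.1 x + Ft x (z.1 x) (z.2 x) * ξ.2 x) +
      intV μ (fun x => Fs x (z.1 x) (z.2 x) * η.1 x + Ft x (z.1 x) (z.2 x) * η.2 x) := by
    unfold intV
    rw [← Finset.sum_add_distrib]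
    exact Finset.sum_congr rfl fun x _ => by simp only [Pi.add_apply]; ring
  rw [e1, e2, eF]
  ring

lemma DJ_smul_right (z ξ : (V → ℝ) × (V → ℝ)) (c : ℝ) :
    DJ w μ h1 h2 m1 m2 p q lam Fs Ft z (c • ξ) =
      c * DJ w μ h1 h2 m1 m2 p q lam Fs Ft z ξ := by
  unfold DJ
  rw [Prod.smul_fst, Prod.smul_snd, Bmp'_smul_right, Bmp'_smul_right]
  have e1 : intV μ (fun x => h1 x * |z.1 x| ^ (p - 2) * z.1 x * ((c • ξ.1) x)) =
      c * intV μ (fun x => h1 x * |z.1 x| ^ (p - 2) * z.1 x * ξ.1 x) := by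
    unfold intV
    rw [Finset.mul_sum]
    exact Finset.sum_congr rfl fun x _ => by
      simp only [Pi.smul_apply, smul_eq_mul]; ring
  have e2 : intV μ (fun x => h2 x * |z.2 x| ^ (q - 2) * z.2 x * ((c • ξ.2) x)) =
      c * intV μ (fun x => h2 x * |z.2 x| ^ (q - 2) * z.2 x * ξ.2 x) := by
    unfold intV
    rw [Finset.mul_sum]
    exact Finset.sum_congr rfl fun x _ => by
      simp only [Pi.smul_apply, smul_eq_mul]; ring
  have eF : intV μ (fun x => Fs x (z.1 x) (z.2 x) * ((c • ξ.1) x) +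
        Ft x (z.1 x) (z.2 x) * ((c • ξ.2) x)) =
      c * intV μ (fun x => Fs x (z.1 x) (z.2 x) * ξ.1 x + Ft x (z.1 x) (z.2 x) * ξ.2 x) := by
    unfold intV
    rw [Finset.mul_sum]
    exact Finset.sum_congr rfl fun x _ => by
      simp only [Pi.smul_apply, smul_eq_mul]; ring
  rw [e1, e2, eF]
  ring

def DJlin (z : (V → ℝ) × (V → ℝ)) : ((V → ℝ) × (V → ℝ)) →ₗ[ℝ] ℝ where
  toFun := DJ w μ h1 h2 m1 m2 p q lam Fs Ft z
  map_add' := DJ_add_right w μ h1 h2 m1 m2 p q lam Fs Ft z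
  map_smul' := by
    intro c ξ
    simpa using DJ_smul_right w μ h1 h2 m1 m2 p q lam Fs Ft z ξ c

lemma DJ_repr [DecidableEq V] (z ξ : (V → ℝ) × (V → ℝ)) :
    DJ w μ h1 h2 m1 m2 p q lam Fs Ft z ξ =
      ∑ x, (ξ.1 x * DJ w μ h1 h2 m1 m2 p q lam Fs Ft z ((Pi.single x 1 : V → ℝ), (0 : V → ℝ)) +
            ξ.2 x * DJ w μ h1 h2 m1 m2 p q lam Fs Ft z ((0 : V → ℝ), (Pi.single x 1 : V → ℝ))) := by
  have hsing : ∀ g : V → ℝ, g = ∑ x, g x • (Pi.single x 1 : V → ℝ) := by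
    intro g
    funext y
    rw [Finset.sum_apply]
    simp [Pi.single_apply]
  have hξ : ξ = ∑ x, (ξ.1 x • ((Pi.single x 1 : V → ℝ), (0 : V → ℝ)) +
      ξ.2 x • ((0 : V → ℝ), (Pi.single x 1 : V → ℝ))) := by
    refine Prod.ext ?_ ?_
    · rw [Prod.fst_sum]
      simp only [Prod.fst_add, Prod.smul_fst, smul_zero, add_zero]
      exact hsing ξ.1
    · rw [Prod.snd_sum]
      simp only [Prod.snd_add, Prod.smul_snd, smul_zero, zero_add]
      exact hsing ξ.2
  calc DJ w μ h1 h2 m1 m2 p q lam Fs Ft z ξ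
      = DJlin w μ h1 h2 m1 m2 p q lam Fs Ft z ξ := rfl
    _ = ∑ x, (ξ.1 x * DJ w μ h1 h2 m1 m2 p q lam Fs Ft z ((Pi.single x 1 : V → ℝ), (0 : V → ℝ)) +
            ξ.2 x * DJ w μ h1 h2 m1 m2 p q lam Fs Ft z ((0 : V → ℝ), (Pi.single x 1 : V → ℝ))) := by
        conv_lhs => rw [hξ]
        rw [map_sum]
        exact Finset.sum_congr rfl fun x _ => by
          rw [map_add, map_smul, map_smul]
          simp [smul_eq_mul]
          rfl

end MPaux
end MPaux5

noncomputable section MPaux6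
namespace MPaux

variable {V : Type*} [Fintype V] [Nonempty V]
variable (w : V → V → ℝ) (μ : V → ℝ)

lemma cont_glap : Continuous (glap w μ) := by
  apply continuous_pi
  intro x
  unfold glap
  exact continuous_const.mul (continuous_finset_sum _ fun y _ =>
    continuous_const.mul ((continuous_apply y).sub (continuous_apply x)))

lemma cont_glapIter (k : ℕ) : Continuous ((glap w μ)^[k]) :=
  (cont_glap w μ).iterate k

lemma cont_ggam_comp {α : Type*} [TopologicalSpace α] (f g : α → V → ℝ)
    (hf : Continuous f) (hg : Continuous g) (x : V) :
    Continuous fun z => ggam w μ (f z) (g z) x := by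
  unfold ggam
  exact continuous_const.mul (continuous_finset_sum _ fun y _ =>
    ((continuous_const.mul (((continuous_apply y).comp hf).sub
      ((continuous_apply x).comp hf)))).mul
      (((continuous_apply y).comp hg).sub ((continuous_apply x).comp hg)))

lemma cont_gradm (m : ℕ) (x : V) : Continuous fun u : V → ℝ => gradm w μ m u x := by
  by_cases hm : m % 2 = 1
  · simp only [gradm, if_pos hm]
    unfold gnorm
    exact Real.continuous_sqrt.comp (cont_ggam_comp w μ _ _
      (cont_glapIter w μ _) (cont_glapIter w μ _) x)
  · simp only [gradm, if_neg hm]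
    exact ((continuous_apply x).comp (cont_glapIter w μ _)).abs

lemma fderiv_pi_fst (F Fsf : V → ℝ → ℝ → ℝ)
    (hF0 : ∀ x, ContDiff ℝ 1 (fun st : ℝ × ℝ => F x st.1 st.2))
    (hFs : ∀ x s t, HasDerivAt (fun z => F x z t) (Fsf x s t) s)
    (x : V) (st : ℝ × ℝ) :
    fderiv ℝ (fun st : ℝ × ℝ => F x st.1 st.2) st (1, 0) = Fsf x st.1 st.2 := by
  set f : ℝ × ℝ → ℝ := fun st => F x st.1 st.2 with hf
  have hdiff : HasFDerivAt f (fderiv ℝ f st) st :=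
    (((hF0 x).differentiable one_ne_zero) st).hasFDerivAt
  have hc1 : HasDerivAt (fun τ' : ℝ => ((st.1 + τ', st.2) : ℝ × ℝ)) (1, 0) 0 :=
    (((hasDerivAt_id (0:ℝ)).const_add st.1)).prodMk (hasDerivAt_const 0 st.2)
  have hdiff' : HasFDerivAt f (fderiv ℝ f st) ((st.1 + 0, st.2) : ℝ × ℝ) := by simpa using hdiff
  have h1 : HasDerivAt (fun τ' => F x (st.1 + τ') st.2) (fderiv ℝ f st (1, 0)) 0 :=
    by have := hdiff'.comp_hasDerivAt 0 hc1; exact this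
  have h2 : HasDerivAt (fun τ' => F x (st.1 + τ') st.2) (Fsf x st.1 st.2) 0 :=
    HasDerivAt.comp_const_add st.1 0 (by simpa using hFs x st.1 st.2)
  exact h1.unique h2

lemma fderiv_pi_snd (F Ftf : V → ℝ → ℝ → ℝ)
    (hF0 : ∀ x, ContDiff ℝ 1 (fun st : ℝ × ℝ => F x st.1 st.2))
    (hFt : ∀ x s t, HasDerivAt (fun z => F x s z) (Ftf x s t) t)
    (x : V) (st : ℝ × ℝ) :
    fderiv ℝ (fun st : ℝ × ℝ => F x st.1 st.2) st (0, 1) = Ftf x st.1 st.2 := by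
  set f : ℝ × ℝ → ℝ := fun st => F x st.1 st.2 with hf
  have hdiff : HasFDerivAt f (fderiv ℝ f st) st :=
    (((hF0 x).differentiable one_ne_zero) st).hasFDerivAt
  have hc1 : HasDerivAt (fun τ' : ℝ => ((st.1, st.2 + τ') : ℝ × ℝ)) (0, 1) 0 :=
    (hasDerivAt_const 0 st.1).prodMk ((hasDerivAt_id (0:ℝ)).const_add st.2)
  have hdiff' : HasFDerivAt f (fderiv ℝ f st) ((st.1, st.2 + 0) : ℝ × ℝ) := by simpa using hdiff
  have h1 : HasDerivAt (fun τ' => F x st.1 (st.2 + τ')) (fderiv ℝ f st (0, 1)) 0 :=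
    by have := hdiff'.comp_hasDerivAt 0 hc1; exact this
  have h2 : HasDerivAt (fun τ' => F x st.1 (st.2 + τ')) (Ftf x st.1 st.2) 0 :=
    HasDerivAt.comp_const_add st.2 0 (by simpa using hFt x st.1 st.2)
  exact h1.unique h2

lemma cont_Fs (F Fsf : V → ℝ → ℝ → ℝ)
    (hF0 : ∀ x, ContDiff ℝ 1 (fun st : ℝ × ℝ => F x st.1 st.2))
    (hFs : ∀ x s t, HasDerivAt (fun z => F x z t) (Fsf x s t) s) (x : V) :
    Continuous fun st : ℝ × ℝ => Fsf x st.1 st.2 := by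
  have hc : Continuous (fderiv ℝ (fun st : ℝ × ℝ => F x st.1 st.2)) :=
    (contDiff_one_iff_fderiv.mp (hF0 x)).2
  have : (fun st : ℝ × ℝ => Fsf x st.1 st.2) =
      fun st => fderiv ℝ (fun st : ℝ × ℝ => F x st.1 st.2) st (1, 0) :=
    funext fun st => (fderiv_pi_fst F Fsf hF0 hFs x st).symm
  rw [this]
  exact hc.clm_apply continuous_const

lemma cont_Ft (F Ftf : V → ℝ → ℝ → ℝ)
    (hF0 : ∀ x, ContDiff ℝ 1 (fun st : ℝ × ℝ => F x st.1 st.2))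
    (hFt : ∀ x s t, HasDerivAt (fun z => F x s z) (Ftf x s t) t) (x : V) :
    Continuous fun st : ℝ × ℝ => Ftf x st.1 st.2 := by
  have hc : Continuous (fderiv ℝ (fun st : ℝ × ℝ => F x st.1 st.2)) :=
    (contDiff_one_iff_fderiv.mp (hF0 x)).2
  have : (fun st : ℝ × ℝ => Ftf x st.1 st.2) =
      fun st => fderiv ℝ (fun st : ℝ × ℝ => F x st.1 st.2) st (0, 1) :=
    funext fun st => (fderiv_pi_snd F Ftf hF0 hFt x st).symm
  rw [this]
  exact hc.clm_apply continuous_const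

variable (h1 h2 : V → ℝ) (m1 m2 : ℕ) (p q lam : ℝ)

lemma cont_PhiF (hp : 2 ≤ p) (hq : 2 ≤ q) :
    Continuous (PhiF w μ h1 h2 m1 m2 p q) := by
  unfold PhiF intV
  apply Continuous.add
  · apply continuous_const.mul
    apply continuous_finset_sum
    intro x _
    apply continuous_const.mul
    apply Continuous.add
    · exact ((cont_gradm w μ m1 x).comp continuous_fst).rpow_const
        (fun z => Or.inr (by linarith))
    · exact continuous_const.mul
        ((((continuous_apply x).comp continuous_fst).abs).rpow_const (fun z => Or.inr (by linarith)))
  · apply continuous_const.mul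
    apply continuous_finset_sum
    intro x _
    apply continuous_const.mul
    apply Continuous.add
    · exact ((cont_gradm w μ m2 x).comp continuous_snd).rpow_const
        (fun z => Or.inr (by linarith))
    · exact continuous_const.mul
        ((((continuous_apply x).comp continuous_snd).abs).rpow_const (fun z => Or.inr (by linarith)))

lemma cont_eval (x : V) :
    Continuous fun z : (V → ℝ) × (V → ℝ) => ((z.1 x, z.2 x) : ℝ × ℝ) :=
  ((continuous_apply x).comp continuous_fst).prodMk ((continuous_apply x).comp continuous_snd)

lemma cont_PsiF (F : V → ℝ → ℝ → ℝ)
    (hF0 : ∀ x, ContDiff ℝ 1 (fun st : ℝ × ℝ => F x st.1 st.2)) :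
    Continuous (PsiF μ F) := by
  unfold PsiF intV
  apply continuous_finset_sum
  intro x _
  exact continuous_const.mul ((hF0 x).continuous.comp (cont_eval x))

lemma cont_EJ (F : V → ℝ → ℝ → ℝ) (hp : 2 ≤ p) (hq : 2 ≤ q)
    (hF0 : ∀ x, ContDiff ℝ 1 (fun st : ℝ × ℝ => F x st.1 st.2)) :
    Continuous (EJ w μ h1 h2 m1 m2 p q lam F) := by
  unfold EJ
  exact (cont_PhiF w μ h1 h2 m1 m2 p q hp hq).sub
    (continuous_const.mul (cont_PsiF μ F hF0))

lemma cont_Bmp' (m : ℕ) (hp2 : 2 ≤ p) (φ : V → ℝ) :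
    Continuous fun u : V → ℝ => Bmp' w μ m p u φ := by
  unfold Bmp' intV
  by_cases hm : m % 2 = 1
  · simp only [if_pos hm]
    apply continuous_finset_sum
    intro x _
    apply continuous_const.mul
    exact ((cont_gradm w μ m x).rpow_const (fun u => Or.inr (by linarith))).mul
      (cont_ggam_comp w μ _ _ (cont_glapIter w μ _) continuous_const x)
  · simp only [if_neg hm]
    apply continuous_finset_sum
    intro x _
    apply continuous_const.mul
    exact (((cont_gradm w μ m x).rpow_const (fun u => Or.inr (by linarith))).mul
      ((continuous_apply x).comp (cont_glapIter w μ _))).mul continuous_const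

lemma cont_DJ (Fd Fsf Ftf : V → ℝ → ℝ → ℝ) (hp : 2 ≤ p) (hq : 2 ≤ q)
    (hF0 : ∀ x, ContDiff ℝ 1 (fun st : ℝ × ℝ => Fd x st.1 st.2))
    (hFs : ∀ x s t, HasDerivAt (fun z => Fd x z t) (Fsf x s t) s)
    (hFt : ∀ x s t, HasDerivAt (fun z => Fd x s z) (Ftf x s t) t)
    (ξ : (V → ℝ) × (V → ℝ)) :
    Continuous fun z => DJ w μ h1 h2 m1 m2 p q lam Fsf Ftf z ξ := by
  unfold DJ
  apply Continuous.sub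
  · apply Continuous.add
    · apply Continuous.add
      · exact (cont_Bmp' w μ p m1 hp ξ.1).comp continuous_fst
      · unfold intV
        apply continuous_finset_sum
        intro x _
        apply continuous_const.mul
        refine ((Continuous.mul ?_ ((continuous_apply x).comp continuous_fst)).mul continuous_const)
        exact continuous_const.mul ((((continuous_apply x).comp continuous_fst).abs).rpow_const
          (fun z => Or.inr (by linarith)))
    · apply Continuous.add
      · exact (cont_Bmp' w μ q m2 hq ξ.2).comp continuous_snd
      · unfold intV
        apply continuous_finset_sum
        intro x _
        apply continuous_const.mul
        refine ((Continuous.mul ?_ ((continuous_apply x).comp continuous_snd)).mul continuous_const)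
        exact continuous_const.mul ((((continuous_apply x).comp continuous_snd).abs).rpow_const
          (fun z => Or.inr (by linarith)))
  · apply continuous_const.mul
    unfold intV
    apply continuous_finset_sum
    intro x _
    apply continuous_const.mul
    apply Continuous.add
    · exact (((cont_Fs Fd Fsf hF0 hFs x).comp (cont_eval x)).mul continuous_const)
    · exact (((cont_Ft Fd Ftf hF0 hFt x).comp (cont_eval x)).mul continuous_const)

end MPaux
end MPaux6

noncomputable section MPaux7
namespace MPaux

open Set

lemma mp_abstract {X : Type*} [NormedAddCommGroup X] [NormedSpace ℝ X]
    (J Φ : X → ℝ) (g : X → X) (ip : X → X → ℝ)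
    (hJ : Continuous J) (hΦ : Continuous Φ) (hg : Continuous g)
    (hip : Continuous fun ab : X × X => ip ab.1 ab.2)
    (hipneg : ∀ a b, ip a (-b) = -(ip a b))
    (hippos : ∀ a, a ≠ 0 → 0 < ip a a)
    (hgrad : ∀ (z ξ : X) (t : ℝ), HasDerivAt (fun s : ℝ => J (z + s • ξ)) (ip (g (z + t • ξ)) ξ) t)
    (hcomp : ∀ b : ℝ, IsCompact {z : X | J z ≤ b})
    (z1 z2 : X) (r ρ : ℝ) (hρ : 0 < ρ)
    (hΦ1 : Φ z1 < r) (hΦ2 : r < Φ z2)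
    (hsph : ∀ z, Φ z = r → ρ ≤ J z)
    (hJ1 : J z1 < ρ / 2) (hJ2 : J z2 < ρ / 2) :
    ∃ z3, g z3 = 0 ∧ ρ / 2 ≤ J z3 := by
  by_contra hcon
  push_neg at hcon
  -- segment
  set σ : ℝ → X := fun s => z1 + s • (z2 - z1) with hσdef
  have hσc : Continuous σ := continuous_const.add (continuous_id.smul continuous_const)
  have hσ0 : σ 0 = z1 := by simp [hσdef]
  have hσ1 : σ 1 = z2 := by simp [hσdef]
  obtain ⟨s₀, hs₀, hb0'⟩ := isCompact_Icc.exists_isMaxOn (Set.nonempty_Icc.mpr zero_le_one)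
    ((hJ.comp hσc).continuousOn)
  have hb0 : ∀ s ∈ Icc (0:ℝ) 1, J (σ s) ≤ J (σ s₀) := fun s hs => hb0' hs
  set b0 := J (σ s₀) with hb0def
  -- K
  set K : Set X := {z | ρ / 2 ≤ J z} ∩ {z | J z ≤ b0} with hKdef
  have hKclosed : IsClosed K :=
    (isClosed_le continuous_const hJ).inter (isClosed_le hJ continuous_const)
  have hKcomp : IsCompact K := (hcomp b0).of_isClosed_subset hKclosed (fun z hz => hz.2)
  have hIVT : ∀ γ : ℝ → X, Continuous γ → γ 0 = z1 → γ 1 = z2 →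
      ∃ s ∈ Icc (0:ℝ) 1, Φ (γ s) = r := by
    intro γ hγ hγ0 hγ1
    have h := intermediate_value_Icc (zero_le_one) ((hΦ.comp hγ).continuousOn)
    have hr : r ∈ Icc ((Φ ∘ γ) 0) ((Φ ∘ γ) 1) := by
      constructor
      · simp only [Function.comp_apply, hγ0]; exact le_of_lt hΦ1
      · simp only [Function.comp_apply, hγ1]; exact le_of_lt hΦ2
    obtain ⟨s, hs, hval⟩ := h hr
    exact ⟨s, hs, hval⟩
  have hKne : K.Nonempty := by
    obtain ⟨s, hs, hval⟩ := hIVT σ hσc hσ0 hσ1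
    exact ⟨σ s, ⟨le_trans (by linarith) (hsph _ hval), hb0 s hs⟩⟩
  have hgne : ∀ z ∈ K, g z ≠ 0 := by
    intro z hz hg0
    exact absurd (hcon z hg0) (not_lt.mpr hz.1)
  -- minimal gradient norm (squared) on K
  have hcontgg : Continuous fun z : X => ip (g z) (g z) :=
    hip.comp ((hg).prodMk (hg))
  obtain ⟨x₀, hx₀K, hx₀min'⟩ := hKcomp.exists_isMinOn hKne hcontgg.continuousOn
  have hx₀min : ∀ z ∈ K, ip (g x₀) (g x₀) ≤ ip (g z) (g z) := fun z hz => hx₀min' hz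
  set e := ip (g x₀) (g x₀) with hedef
  have hepos : 0 < e := hippos _ (hgne _ hx₀K)
  -- uniform step size h0
  obtain ⟨h0, h0pos, h0le1, hstep⟩ : ∃ h0 : ℝ, 0 < h0 ∧ h0 ≤ 1 ∧
      ∀ x ∈ K, ∀ t ∈ Icc (0:ℝ) h0, e / 2 < ip (g (x - t • g x)) (g x) := by
    set S : Set (X × ℝ) := (K ×ˢ Icc (0:ℝ) 1) ∩
      {pr : X × ℝ | ip (g (pr.1 - pr.2 • g pr.1)) (g pr.1) ≤ e / 2} with hSdef
    have hcontS : Continuous fun pr : X × ℝ => ip (g (pr.1 - pr.2 • g pr.1)) (g pr.1) :=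
      hip.comp ((hg.comp (continuous_fst.sub (continuous_snd.smul
        (hg.comp continuous_fst)))).prodMk (hg.comp continuous_fst))
    have hSclosed : IsClosed S :=
      (hKclosed.prod isClosed_Icc).inter (isClosed_le hcontS continuous_const)
    have hScomp : IsCompact S := (hKcomp.prod isCompact_Icc).of_isClosed_subset hSclosed
      (fun pr hpr => hpr.1)
    rcases S.eq_empty_or_nonempty with hSe | hSne
    · refine ⟨1, one_pos, le_refl 1, ?_⟩
      intro x hx t ht
      by_contra hle
      push_neg at hle
      have : (x, t) ∈ S := ⟨⟨hx, ht⟩, hle⟩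
      rw [hSe] at this
      exact this
    · obtain ⟨pr₀, hpr₀S, hprmin'⟩ := hScomp.exists_isMinOn hSne continuous_snd.continuousOn
      have hprmin : ∀ pr ∈ S, pr₀.2 ≤ pr.2 := fun pr hpr => hprmin' hpr
      have ht₀pos : 0 < pr₀.2 := by
        rcases lt_or_eq_of_le hpr₀S.1.2.1 with h | h
        · exact h
        · exfalso
          have hx₀' : pr₀.1 ∈ K := hpr₀S.1.1
          have hineq : ip (g (pr₀.1 - pr₀.2 • g pr₀.1)) (g pr₀.1) ≤ e / 2 := hpr₀S.2
          rw [← h] at hineq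
          simp only [zero_smul, sub_zero] at hineq
          have this := hineq
          have hge : e ≤ ip (g pr₀.1) (g pr₀.1) := hx₀min _ hx₀'
          linarith
      refine ⟨min (pr₀.2 / 2) 1, by positivity, min_le_right _ _, ?_⟩
      intro x hx t ht
      by_contra hle
      push_neg at hle
      have htmem : t ∈ Icc (0:ℝ) 1 := ⟨ht.1, le_trans ht.2 (min_le_right _ _)⟩
      have : (x, t) ∈ S := ⟨⟨hx, htmem⟩, hle⟩
      have := hprmin _ this
      have h2 : t ≤ pr₀.2 / 2 := le_trans ht.2 (min_le_left _ _)
      simp only at this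
      linarith
  set d := h0 * (e / 2) with hddef
  have hdpos : 0 < d := by positivity
  -- cutoff
  set χ : X → ℝ := fun x => min 1 (max 0 ((J x - ρ / 2) / (ρ / 2))) with hχdef
  have hχc : Continuous χ :=
    (continuous_const.min (continuous_const.max ((hJ.sub continuous_const).div_const _)))
  have hχ0 : ∀ x, 0 ≤ χ x := fun x => le_min zero_le_one (le_max_left _ _)
  have hχ1 : ∀ x, χ x ≤ 1 := fun x => min_le_left _ _
  have hχlow : ∀ x, J x ≤ ρ / 2 → χ x = 0 := by
    intro x hx
    have : (J x - ρ / 2) / (ρ / 2) ≤ 0 :=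
      div_nonpos_of_nonpos_of_nonneg (by linarith) (by linarith)
    rw [hχdef]
    simp only
    rw [max_eq_left this, min_eq_right (le_refl 0 |>.trans zero_le_one)]
  have hχhigh : ∀ x, ρ ≤ J x → χ x = 1 := by
    intro x hx
    have h1 : (1:ℝ) ≤ (J x - ρ / 2) / (ρ / 2) := by
      rw [le_div_iff₀ (by linarith)]
      linarith
    have h2 : (1:ℝ) ≤ max 0 ((J x - ρ / 2) / (ρ / 2)) := le_trans h1 (le_max_right _ _)
    rw [hχdef]
    simp only
    rw [min_eq_left h2]
  -- deformation
  set η : X → X := fun x => x - (h0 * χ x) • g x with hηdef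
  have hηc : Continuous η := continuous_id.sub ((continuous_const.mul hχc).smul hg)
  have hηfix : ∀ x, J x ≤ ρ / 2 → η x = x := by
    intro x hx
    rw [hηdef]
    simp only
    rw [hχlow x hx, mul_zero, zero_smul, sub_zero]
  -- decrease
  have hdec : ∀ x, J x ≤ b0 → J (η x) ≤ J x - χ x * d := by
    intro x hxb
    by_cases hxρ : J x ≤ ρ / 2
    · rw [hηfix x hxρ, hχlow x hxρ]
      simp
    · push_neg at hxρ
      have hxK : x ∈ K := ⟨le_of_lt hxρ, hxb⟩
      set h := h0 * χ x with hhdef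
      have hh0 : 0 ≤ h := mul_nonneg (le_of_lt h0pos) (hχ0 x)
      have hhle : h ≤ h0 := by
        calc h = h0 * χ x := rfl
        _ ≤ h0 * 1 := by
            apply mul_le_mul_of_nonneg_left (hχ1 x) (le_of_lt h0pos)
        _ = h0 := mul_one h0
      rcases eq_or_lt_of_le hh0 with h0eq | hhpos
      · rw [hηdef]
        simp only
        rw [← hhdef, ← h0eq, zero_smul, sub_zero]
        nlinarith [hχ0 x, hdpos, le_of_lt h0pos, mul_nonneg (hχ0 x) (le_of_lt hdpos)]
      · -- MVT
        have hf : ∀ s : ℝ, HasDerivAt (fun s' => J (x + s' • (-g x)))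
            (-(ip (g (x - s • g x)) (g x))) s := by
          intro s
          have := hgrad x (-g x) s
          rw [smul_neg, ← sub_eq_add_neg, hipneg] at this
          exact this
        have hcont : ContinuousOn (fun s' => J (x + s' • (-g x))) (Icc 0 h) :=
          (hJ.comp (continuous_const.add (continuous_id.smul continuous_const))).continuousOn
        obtain ⟨θ, hθ, hslope⟩ := exists_hasDerivAt_eq_slope (fun s' => J (x + s' • (-g x)))
          (fun s => -(ip (g (x - s • g x)) (g x))) hhpos hcont (fun s _ => hf s)
        have hθmem : θ ∈ Icc (0:ℝ) h0 := ⟨le_of_lt hθ.1, le_trans (le_of_lt hθ.2) hhle⟩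
        have hipθ : e / 2 < ip (g (x - θ • g x)) (g x) := hstep x hxK θ hθmem
        have hJη : J (x + h • (-g x)) - J (x + (0:ℝ) • (-g x)) =
            -(ip (g (x - θ • g x)) (g x)) * (h - 0) := by
          have hne : h - 0 ≠ 0 := by simpa using ne_of_gt hhpos
          rw [eq_div_iff hne] at hslope
          linarith [hslope]
        have hηeq : η x = x + h • (-g x) := by
          rw [hηdef]
          simp only
          rw [smul_neg, ← sub_eq_add_neg, hhdef]
        rw [hηeq]
        have h0smul : J (x + (0:ℝ) • (-g x)) = J x := by rw [zero_smul, add_zero]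
        rw [h0smul] at hJη
        have : J (x + h • (-g x)) = J x - ip (g (x - θ • g x)) (g x) * h := by linarith [hJη]
        rw [this]
        have : χ x * d ≤ ip (g (x - θ • g x)) (g x) * h := by
          rw [hddef, hhdef]
          have he2 : e / 2 ≤ ip (g (x - θ • g x)) (g x) := le_of_lt hipθ
          have hχpos : 0 < χ x := by
            by_contra hc
            push_neg at hc
            have : χ x = 0 := le_antisymm hc (hχ0 x)
            rw [hhdef, this, mul_zero] at hhpos
            exact lt_irrefl 0 hhpos
          calc χ x * (h0 * (e / 2)) = (e / 2) * (h0 * χ x) := by ring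
            _ ≤ ip (g (x - θ • g x)) (g x) * (h0 * χ x) := by
                apply mul_le_mul_of_nonneg_right he2
                positivity
        linarith
  have hdec' : ∀ x, J x ≤ b0 → J (η x) ≤ J x := by
    intro x hx
    have := hdec x hx
    nlinarith [hχ0 x, le_of_lt hdpos, mul_nonneg (hχ0 x) (le_of_lt hdpos)]
  have hdecρ : ∀ x, J x ≤ b0 → ρ ≤ J x → J (η x) ≤ J x - d := by
    intro x hx hρx
    have := hdec x hx
    rw [hχhigh x hρx, one_mul] at this
    exact this
  -- iteration
  have hiter : ∀ n : ℕ, ∀ x, J x ≤ b0 →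
      J (η^[n] x) ≤ b0 ∧ (ρ ≤ J (η^[n] x) → J (η^[n] x) ≤ b0 - n * d) := by
    intro n
    induction n with
    | zero => intro x hx; exact ⟨hx, fun _ => by simpa using hx⟩
    | succ n ih =>
        intro x hx
        obtain ⟨hyb, hyimp⟩ := ih x hx
        rw [Function.iterate_succ_apply']
        constructor
        · exact le_trans (hdec' _ hyb) hyb
        · intro hρy
          have hρy' : ρ ≤ J (η^[n] x) := le_trans hρy (hdec' _ hyb)
          have h1 := hyimp hρy'
          have h2 := hdecρ _ hyb hρy'
          push_cast
          linarith
  obtain ⟨N, hN⟩ := exists_nat_gt ((b0 - ρ) / d)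
  have hNd : b0 - N * d < ρ := by
    have := (div_lt_iff₀ hdpos).mp hN
    linarith
  -- final path
  set γ : ℝ → X := fun s => η^[N] (σ s) with hγdef
  have hγc : Continuous γ := (hηc.iterate N).comp hσc
  have hγ0 : γ 0 = z1 := by
    rw [hγdef]
    simp only
    rw [hσ0, Function.iterate_fixed (hηfix z1 (le_of_lt hJ1)) N]
  have hγ1 : γ 1 = z2 := by
    rw [hγdef]
    simp only
    rw [hσ1, Function.iterate_fixed (hηfix z2 (le_of_lt hJ2)) N]
  obtain ⟨s, hs, hval⟩ := hIVT γ hγc hγ0 hγ1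
  have hρs : ρ ≤ J (γ s) := hsph _ hval
  have hσb : J (σ s) ≤ b0 := hb0 s hs
  obtain ⟨_, himp⟩ := hiter N (σ s) hσb
  have := himp hρs
  linarith

end MPaux
end MPaux7

noncomputable section MPaux8
namespace MPaux

open Finset

variable {V : Type*} [Fintype V] [Nonempty V]
variable (w : V → V → ℝ) (μ : V → ℝ)

lemma fmin_le' (f : V → ℝ) (x : V) : Finset.univ.inf' Finset.univ_nonempty f ≤ f x :=
  Finset.inf'_le f (Finset.mem_univ x)

lemma fmin_pos' (f : V → ℝ) (hf : ∀ x, 0 < f x) :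
    0 < Finset.univ.inf' Finset.univ_nonempty f := by
  rw [Finset.lt_inf'_iff]
  exact fun x _ => hf x

lemma coer_one_var (a C p α : ℝ) (ha : 0 < a) (hC : 0 ≤ C) (hα : 0 ≤ α) (hap : α < p)
    (hp1 : 1 ≤ p) :
    ∃ T m : ℝ, 1 ≤ T ∧ 0 ≤ m ∧
      (∀ N, 0 ≤ N → -m ≤ a * N ^ p - C * N ^ α) ∧
      (∀ B N, 0 ≤ N → a * N ^ p - C * N ^ α ≤ B → N ≤ max T (2 * B / a)) := by
  set C' := C + 1 with hC'
  have hC'pos : 0 < C' := by linarith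
  set T : ℝ := max 1 ((2 * C' / a) ^ (1 / (p - α))) with hT
  have hT1 : 1 ≤ T := le_max_left _ _
  have hTpos : 0 < T := lt_of_lt_of_le one_pos hT1
  set m := C' * T ^ α with hm
  have hTα : (1:ℝ) ≤ T ^ α := by
    have := Real.rpow_le_rpow_of_exponent_le hT1 hα
    rwa [Real.rpow_zero] at this
  have hmpos : 0 ≤ m := le_of_lt (lt_of_lt_of_le hC'pos (by nlinarith))
  -- key: for N ≥ T, C * N^α ≤ (a/2) * N^p
  have hkey : ∀ N, T ≤ N → C * N ^ α ≤ a / 2 * N ^ p := by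
    intro N hN
    have hNpos : 0 < N := lt_of_lt_of_le hTpos hN
    have h1 : N ^ α = N ^ p * N ^ (α - p) := by
      rw [← Real.rpow_add hNpos]
      congr 1
      ring
    have h2 : N ^ (α - p) ≤ T ^ (α - p) :=
      Real.rpow_le_rpow_of_nonpos hTpos hN (by linarith)
    have h3 : T ^ (α - p) ≤ a / (2 * C') := by
      have hbase : (2 * C' / a) ^ (1 / (p - α)) ≤ T := le_max_right _ _
      have hbpos : (0:ℝ) ≤ 2 * C' / a := by positivity
      have h4 : (2 * C' / a) ≤ T ^ (p - α) := by
        have := Real.rpow_le_rpow (Real.rpow_nonneg hbpos _) hbase (by linarith : (0:ℝ) ≤ p - α)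
        rwa [← Real.rpow_mul hbpos, one_div, inv_mul_cancel₀ (by linarith : p - α ≠ 0),
          Real.rpow_one] at this
      have h5 : T ^ (α - p) = (T ^ (p - α))⁻¹ := by
        rw [← Real.rpow_neg (le_of_lt hTpos)]
        congr 1
        ring
      rw [h5]
      rw [div_eq_mul_inv a]
      have h6 : (T ^ (p - α))⁻¹ ≤ (2 * C' / a)⁻¹ := by
        apply inv_anti₀ (by positivity) h4
      calc (T ^ (p - α))⁻¹ ≤ (2 * C' / a)⁻¹ := h6
        _ = a * (2 * C')⁻¹ := by
            rw [div_eq_mul_inv, mul_inv, inv_inv]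
            ring
    calc C * N ^ α = C * (N ^ p * N ^ (α - p)) := by rw [← h1]
      _ ≤ C' * (N ^ p * (a / (2 * C'))) := by
          apply mul_le_mul (by linarith)
          · apply mul_le_mul_of_nonneg_left (le_trans h2 h3) (Real.rpow_nonneg (le_of_lt hNpos) _)
          · positivity
          · linarith
      _ = a / 2 * N ^ p := by field_simp
  refine ⟨T, m, hT1, hmpos, ?_, ?_⟩
  · intro N hN
    rcases le_or_gt N T with hNT | hNT
    · have h1 : 0 ≤ a * N ^ p := by positivity
      have h2 : C * N ^ α ≤ C' * T ^ α := by
        apply mul_le_mul (by linarith) (Real.rpow_le_rpow hN hNT hα) (Real.rpow_nonneg hN _)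
          (le_of_lt hC'pos)
      rw [hm]
      linarith
    · have := hkey N (le_of_lt hNT)
      have h1 : 0 ≤ a / 2 * N ^ p := by positivity
      nlinarith [Real.rpow_nonneg hN p]
  · intro B N hN hval
    rcases le_or_gt N T with hNT | hNT
    · exact le_trans hNT (le_max_left _ _)
    · have hk := hkey N (le_of_lt hNT)
      have hN1 : 1 ≤ N := le_trans hT1 (le_of_lt hNT)
      have hNp : N ≤ N ^ p := by
        have := Real.rpow_le_rpow_of_exponent_le hN1 hp1
        rwa [Real.rpow_one] at this
      have h1 : a / 2 * N ≤ a / 2 * N ^ p := by nlinarith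
      have h2 : a / 2 * N ^ p ≤ B := by linarith
      have h3 : N ≤ 2 * B / a := by
        rw [le_div_iff₀ ha]
        nlinarith
      exact le_trans h3 (le_max_right _ _)

variable (h1 h2 : V → ℝ) (m1 m2 : ℕ) (p q : ℝ)

lemma PhiF_lower (hw : ∀ x y, 0 ≤ w x y) (hμ : ∀ x, 0 < μ x)
    (hh1 : ∀ x, 0 < h1 x) (hh2 : ∀ x, 0 < h2 x) (hp : 2 ≤ p) (hq : 2 ≤ q)
    (z : (V → ℝ) × (V → ℝ)) (x y : V) :
    (1 / p) * (μ x * (h1 x * |z.1 x| ^ p)) + (1 / q) * (μ y * (h2 y * |z.2 y| ^ q)) ≤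
      PhiF w μ h1 h2 m1 m2 p q z := by
  unfold PhiF intV
  have key1 : μ x * (h1 x * |z.1 x| ^ p) ≤
      ∑ x', μ x' * (gradm w μ m1 z.1 x' ^ p + h1 x' * |z.1 x'| ^ p) := by
    have hterm : μ x * (h1 x * |z.1 x| ^ p) ≤
        μ x * (gradm w μ m1 z.1 x ^ p + h1 x * |z.1 x| ^ p) := by
      have h0 : 0 ≤ gradm w μ m1 z.1 x ^ p := Real.rpow_nonneg (gradm_nonneg w μ m1 z.1 x) p
      have := le_of_lt (hμ x)
      nlinarith
    refine le_trans hterm (Finset.single_le_sum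
      (f := fun x' => μ x' * (gradm w μ m1 z.1 x' ^ p + h1 x' * |z.1 x'| ^ p))
      (fun x' _ => ?_) (Finset.mem_univ x))
    have h0 : 0 ≤ gradm w μ m1 z.1 x' ^ p := Real.rpow_nonneg (gradm_nonneg w μ m1 z.1 x') p
    have h1' : 0 ≤ h1 x' * |z.1 x'| ^ p :=
      mul_nonneg (le_of_lt (hh1 x')) (Real.rpow_nonneg (abs_nonneg _) p)
    have := le_of_lt (hμ x')
    positivity
  have key2 : μ y * (h2 y * |z.2 y| ^ q) ≤
      ∑ x', μ x' * (gradm w μ m2 z.2 x' ^ q + h2 x' * |z.2 x'| ^ q) := by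
    have hterm : μ y * (h2 y * |z.2 y| ^ q) ≤
        μ y * (gradm w μ m2 z.2 y ^ q + h2 y * |z.2 y| ^ q) := by
      have h0 : 0 ≤ gradm w μ m2 z.2 y ^ q := Real.rpow_nonneg (gradm_nonneg w μ m2 z.2 y) q
      have := le_of_lt (hμ y)
      nlinarith
    refine le_trans hterm (Finset.single_le_sum
      (f := fun x' => μ x' * (gradm w μ m2 z.2 x' ^ q + h2 x' * |z.2 x'| ^ q))
      (fun x' _ => ?_) (Finset.mem_univ y))
    have h0 : 0 ≤ gradm w μ m2 z.2 x' ^ q := Real.rpow_nonneg (gradm_nonneg w μ m2 z.2 x') q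
    have h1' : 0 ≤ h2 x' * |z.2 x'| ^ q :=
      mul_nonneg (le_of_lt (hh2 x')) (Real.rpow_nonneg (abs_nonneg _) q)
    have := le_of_lt (hμ x')
    positivity
  have hp0 : (0:ℝ) < 1 / p := by positivity
  have hq0 : (0:ℝ) < 1 / q := by positivity
  have := mul_le_mul_of_nonneg_left key1 (le_of_lt hp0)
  have := mul_le_mul_of_nonneg_left key2 (le_of_lt hq0)
  linarith

lemma PhiF_nonneg (hw : ∀ x y, 0 ≤ w x y) (hμ : ∀ x, 0 < μ x)
    (hh1 : ∀ x, 0 < h1 x) (hh2 : ∀ x, 0 < h2 x) (hp : 2 ≤ p) (hq : 2 ≤ q)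
    (z : (V → ℝ) × (V → ℝ)) : 0 ≤ PhiF w μ h1 h2 m1 m2 p q z := by
  unfold PhiF intV
  have t1 : ∀ x' : V, (0:ℝ) ≤ μ x' * (gradm w μ m1 z.1 x' ^ p + h1 x' * |z.1 x'| ^ p) := by
    intro x'
    have h0 : 0 ≤ gradm w μ m1 z.1 x' ^ p := Real.rpow_nonneg (gradm_nonneg w μ m1 z.1 x') p
    have h1' : 0 ≤ h1 x' * |z.1 x'| ^ p :=
      mul_nonneg (le_of_lt (hh1 x')) (Real.rpow_nonneg (abs_nonneg _) p)
    have := le_of_lt (hμ x')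
    positivity
  have t2 : ∀ x' : V, (0:ℝ) ≤ μ x' * (gradm w μ m2 z.2 x' ^ q + h2 x' * |z.2 x'| ^ q) := by
    intro x'
    have h0 : 0 ≤ gradm w μ m2 z.2 x' ^ q := Real.rpow_nonneg (gradm_nonneg w μ m2 z.2 x') q
    have h1' : 0 ≤ h2 x' * |z.2 x'| ^ q :=
      mul_nonneg (le_of_lt (hh2 x')) (Real.rpow_nonneg (abs_nonneg _) q)
    have := le_of_lt (hμ x')
    positivity
  have s1 : (0:ℝ) ≤ ∑ x', μ x' * (gradm w μ m1 z.1 x' ^ p + h1 x' * |z.1 x'| ^ p) :=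
    Finset.sum_nonneg fun x' _ => t1 x'
  have s2 : (0:ℝ) ≤ ∑ x', μ x' * (gradm w μ m2 z.2 x' ^ q + h2 x' * |z.2 x'| ^ q) :=
    Finset.sum_nonneg fun x' _ => t2 x'
  have hp0 : (0:ℝ) ≤ 1 / p := by positivity
  have hq0 : (0:ℝ) ≤ 1 / q := by positivity
  positivity

lemma abs_le_of_PhiF_le (hw : ∀ x y, 0 ≤ w x y) (hμ : ∀ x, 0 < μ x)
    (hh1 : ∀ x, 0 < h1 x) (hh2 : ∀ x, 0 < h2 x) (hp : 2 ≤ p) (hq : 2 ≤ q)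
    (r : ℝ) (hr : 0 < r) (z : (V → ℝ) × (V → ℝ))
    (hz : PhiF w μ h1 h2 m1 m2 p q z ≤ r) (x : V) :
    |z.1 x| ≤ (p * r) ^ (1 / p) /
        ((Finset.univ.inf' Finset.univ_nonempty h1) ^ (1 / p) *
         (Finset.univ.inf' Finset.univ_nonempty μ) ^ (1 / p)) ∧
    |z.2 x| ≤ (q * r) ^ (1 / q) /
        ((Finset.univ.inf' Finset.univ_nonempty h2) ^ (1 / q) *
         (Finset.univ.inf' Finset.univ_nonempty μ) ^ (1 / q)) := by
  set mh1 := Finset.univ.inf' Finset.univ_nonempty h1 with hmh1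
  set mh2 := Finset.univ.inf' Finset.univ_nonempty h2 with hmh2
  set mμ := Finset.univ.inf' Finset.univ_nonempty μ with hmμ
  have hmh1p : 0 < mh1 := fmin_pos' h1 hh1
  have hmh2p : 0 < mh2 := fmin_pos' h2 hh2
  have hmμp : 0 < mμ := fmin_pos' μ hμ
  have hkey := PhiF_lower w μ h1 h2 m1 m2 p q hw hμ hh1 hh2 hp hq z x x
  have hterm2 : 0 ≤ (1 / q) * (μ x * (h2 x * |z.2 x| ^ q)) := by
    have := le_of_lt (hμ x); have := le_of_lt (hh2 x)
    have : (0:ℝ) ≤ |z.2 x| ^ q := Real.rpow_nonneg (abs_nonneg _) q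
    positivity
  have hterm1 : 0 ≤ (1 / p) * (μ x * (h1 x * |z.1 x| ^ p)) := by
    have := le_of_lt (hμ x); have := le_of_lt (hh1 x)
    have : (0:ℝ) ≤ |z.1 x| ^ p := Real.rpow_nonneg (abs_nonneg _) p
    positivity
  constructor
  · -- first component
    have h1b : (1 / p) * (μ x * (h1 x * |z.1 x| ^ p)) ≤ r := by linarith
    have h2b : mh1 * mμ * |z.1 x| ^ p ≤ p * r := by
      have hle1 : mh1 ≤ h1 x := fmin_le' h1 x
      have hle2 : mμ ≤ μ x := fmin_le' μ x
      have habs : (0:ℝ) ≤ |z.1 x| ^ p := Real.rpow_nonneg (abs_nonneg _) p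
      have hp0 : (0:ℝ) < p := by linarith
      have := mul_le_mul_of_nonneg_left h1b (le_of_lt hp0)
      rw [← mul_assoc] at this
      have heq : p * (1 / p) = 1 := by field_simp
      rw [heq, one_mul] at this
      nlinarith [mul_le_mul hle2 (mul_le_mul_of_nonneg_right hle1 habs) (by positivity : (0:ℝ) ≤ mh1 * |z.1 x| ^ p) (le_of_lt (hμ x))]
    have h3b : |z.1 x| ^ p ≤ p * r / (mh1 * mμ) := by
      rw [le_div_iff₀ (by positivity)]
      linarith
    have h4b : (|z.1 x| ^ p) ^ (1 / p) ≤ (p * r / (mh1 * mμ)) ^ (1 / p) :=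
      Real.rpow_le_rpow (Real.rpow_nonneg (abs_nonneg _) p) h3b (by positivity)
    have h5b : (|z.1 x| ^ p) ^ (1 / p) = |z.1 x| := by
      rw [← Real.rpow_mul (abs_nonneg _), mul_one_div, div_self (by linarith : p ≠ 0),
        Real.rpow_one]
    have h6b : (p * r / (mh1 * mμ)) ^ (1 / p) = (p * r) ^ (1 / p) / (mh1 ^ (1/p) * mμ ^ (1/p)) := by
      rw [Real.div_rpow (by positivity) (by positivity), Real.mul_rpow (le_of_lt hmh1p) (le_of_lt hmμp)]
    rw [h5b, h6b] at h4b
    exact h4b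
  · have h1b : (1 / q) * (μ x * (h2 x * |z.2 x| ^ q)) ≤ r := by linarith
    have h2b : mh2 * mμ * |z.2 x| ^ q ≤ q * r := by
      have hle1 : mh2 ≤ h2 x := fmin_le' h2 x
      have hle2 : mμ ≤ μ x := fmin_le' μ x
      have habs : (0:ℝ) ≤ |z.2 x| ^ q := Real.rpow_nonneg (abs_nonneg _) q
      have hq0 : (0:ℝ) < q := by linarith
      have := mul_le_mul_of_nonneg_left h1b (le_of_lt hq0)
      rw [← mul_assoc] at this
      have heq : q * (1 / q) = 1 := by field_simp
      rw [heq, one_mul] at this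
      nlinarith [mul_le_mul hle2 (mul_le_mul_of_nonneg_right hle1 habs) (by positivity : (0:ℝ) ≤ mh2 * |z.2 x| ^ q) (le_of_lt (hμ x))]
    have h3b : |z.2 x| ^ q ≤ q * r / (mh2 * mμ) := by
      rw [le_div_iff₀ (by positivity)]
      linarith
    have h4b : (|z.2 x| ^ q) ^ (1 / q) ≤ (q * r / (mh2 * mμ)) ^ (1 / q) :=
      Real.rpow_le_rpow (Real.rpow_nonneg (abs_nonneg _) q) h3b (by positivity)
    have h5b : (|z.2 x| ^ q) ^ (1 / q) = |z.2 x| := by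
      rw [← Real.rpow_mul (abs_nonneg _), mul_one_div, div_self (by linarith : q ≠ 0),
        Real.rpow_one]
    have h6b : (q * r / (mh2 * mμ)) ^ (1 / q) = (q * r) ^ (1 / q) / (mh2 ^ (1/q) * mμ ^ (1/q)) := by
      rw [Real.div_rpow (by positivity) (by positivity), Real.mul_rpow (le_of_lt hmh2p) (le_of_lt hmμp)]
    rw [h5b, h6b] at h4b
    exact h4b

end MPaux
end MPaux8

noncomputable section MPaux9
namespace MPaux

open Finset

variable {V : Type*} [Fintype V] [Nonempty V]

lemma crit_to_sol (w : V → V → ℝ) (μ h1 h2 : V → ℝ) (m1 m2 : ℕ) (p q lam : ℝ)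
    (Fs Ft : V → ℝ → ℝ → ℝ) (z : (V → ℝ) × (V → ℝ))
    (hz : ∀ ξ, DJ w μ h1 h2 m1 m2 p q lam Fs Ft z ξ = 0) (φ1 φ2 : V → ℝ) :
    (Bmp' w μ m1 p z.1 φ1 + intV μ (fun x => h1 x * |z.1 x| ^ (p - 2) * z.1 x * φ1 x) =
      lam * intV μ (fun x => Fs x (z.1 x) (z.2 x) * φ1 x)) ∧
    (Bmp' w μ m2 q z.2 φ2 + intV μ (fun x => h2 x * |z.2 x| ^ (q - 2) * z.2 x * φ2 x) =
      lam * intV μ (fun x => Ft x (z.1 x) (z.2 x) * φ2 x)) := by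
  constructor
  · have h : (Bmp' w μ m1 p z.1 φ1 +
        intV μ (fun x => h1 x * |z.1 x| ^ (p - 2) * z.1 x * φ1 x)) +
        (Bmp' w μ m2 q z.2 (0 : V → ℝ) +
          intV μ (fun x => h2 x * |z.2 x| ^ (q - 2) * z.2 x * (0 : V → ℝ) x)) -
        lam * intV μ (fun x => Fs x (z.1 x) (z.2 x) * φ1 x +
          Ft x (z.1 x) (z.2 x) * (0 : V → ℝ) x) = 0 := hz (φ1, 0)
    have e0 : Bmp' w μ m2 q z.2 (0 : V → ℝ) = 0 := Bmp'_zero_right w μ m2 q z.2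
    have e1 : intV μ (fun x => h2 x * |z.2 x| ^ (q - 2) * z.2 x * (0 : V → ℝ) x) = 0 := by
      simp [intV]
    have e2 : intV μ (fun x => Fs x (z.1 x) (z.2 x) * φ1 x +
        Ft x (z.1 x) (z.2 x) * (0 : V → ℝ) x) =
        intV μ (fun x => Fs x (z.1 x) (z.2 x) * φ1 x) := by
      simp [intV]
    rw [e0, e1, e2] at h
    linarith
  · have h : (Bmp' w μ m1 p z.1 (0 : V → ℝ) +
        intV μ (fun x => h1 x * |z.1 x| ^ (p - 2) * z.1 x * (0 : V → ℝ) x)) +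
        (Bmp' w μ m2 q z.2 φ2 +
          intV μ (fun x => h2 x * |z.2 x| ^ (q - 2) * z.2 x * φ2 x)) -
        lam * intV μ (fun x => Fs x (z.1 x) (z.2 x) * (0 : V → ℝ) x +
          Ft x (z.1 x) (z.2 x) * φ2 x) = 0 := hz (0, φ2)
    have e0 : Bmp' w μ m1 p z.1 (0 : V → ℝ) = 0 := Bmp'_zero_right w μ m1 p z.1
    have e1 : intV μ (fun x => h1 x * |z.1 x| ^ (p - 2) * z.1 x * (0 : V → ℝ) x) = 0 := by
      simp [intV]
    have e2 : intV μ (fun x => Fs x (z.1 x) (z.2 x) * (0 : V → ℝ) x +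
        Ft x (z.1 x) (z.2 x) * φ2 x) =
        intV μ (fun x => Ft x (z.1 x) (z.2 x) * φ2 x) := by
      simp [intV]
    rw [e0, e1, e2] at h
    linarith

lemma isCompact_sublevel (w : V → V → ℝ) (μ h1 h2 : V → ℝ) (m1 m2 : ℕ) (p q lam : ℝ)
    (F : V → ℝ → ℝ → ℝ) (f1 f2 g0 : V → ℝ) (α β : ℝ)
    (hw : ∀ x y, 0 ≤ w x y) (hμ : ∀ x, 0 < μ x)
    (hh1 : ∀ x, 0 < h1 x) (hh2 : ∀ x, 0 < h2 x) (hp : 2 ≤ p) (hq : 2 ≤ q)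
    (hF0 : ∀ x, ContDiff ℝ 1 (fun st : ℝ × ℝ => F x st.1 st.2))
    (hα0 : 0 ≤ α) (hαp : α < p) (hβ0 : 0 ≤ β) (hβq : β < q) (hlam : 0 < lam)
    (hF2 : ∀ x s t, F x s t ≤ f1 x * |s| ^ α + f2 x * |t| ^ β + g0 x) (b : ℝ) :
    IsCompact {z : (V → ℝ) × (V → ℝ) | EJ w μ h1 h2 m1 m2 p q lam F z ≤ b} := by
  have hclosed : IsClosed {z : (V → ℝ) × (V → ℝ) | EJ w μ h1 h2 m1 m2 p q lam F z ≤ b} :=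
    isClosed_le (cont_EJ w μ h1 h2 m1 m2 p q lam F hp hq hF0) continuous_const
  apply Metric.isCompact_of_isClosed_isBounded hclosed
  rw [isBounded_iff_forall_norm_le]
  -- constants
  set mμ := Finset.univ.inf' Finset.univ_nonempty μ with hmμ
  set mh1 := Finset.univ.inf' Finset.univ_nonempty h1 with hmh1
  set mh2 := Finset.univ.inf' Finset.univ_nonempty h2 with hmh2
  have hmμp : 0 < mμ := fmin_pos' μ hμ
  have hmh1p : 0 < mh1 := fmin_pos' h1 hh1
  have hmh2p : 0 < mh2 := fmin_pos' h2 hh2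
  set a1 := 1 / p * (mμ * mh1) with ha1
  set a2 := 1 / q * (mμ * mh2) with ha2
  have ha1p : 0 < a1 := by
    rw [ha1]; have : 0 < p := by linarith
    positivity
  have ha2p : 0 < a2 := by
    rw [ha2]; have : 0 < q := by linarith
    positivity
  set C1 := ∑ x, μ x * |f1 x| with hC1
  set C2 := ∑ x, μ x * |f2 x| with hC2
  set C3 := ∑ x, μ x * |g0 x| with hC3
  have hC1n : 0 ≤ C1 := Finset.sum_nonneg fun x _ => mul_nonneg (le_of_lt (hμ x)) (abs_nonneg _)
  have hC2n : 0 ≤ C2 := Finset.sum_nonneg fun x _ => mul_nonneg (le_of_lt (hμ x)) (abs_nonneg _)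
  have hC3n : 0 ≤ C3 := Finset.sum_nonneg fun x _ => mul_nonneg (le_of_lt (hμ x)) (abs_nonneg _)
  obtain ⟨T1, M1, hT1, hM1, hlow1, hbnd1⟩ :=
    coer_one_var a1 (lam * C1) p α ha1p (by positivity) hα0 hαp (by linarith)
  obtain ⟨T2, M2, hT2, hM2, hlow2, hbnd2⟩ :=
    coer_one_var a2 (lam * C2) q β ha2p (by positivity) hβ0 hβq (by linarith)
  set B1 := b + lam * C3 + M2 with hB1
  set B2 := b + lam * C3 + M1 with hB2
  set R := max (max T1 (2 * B1 / a1)) (max T2 (2 * B2 / a2)) with hR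
  refine ⟨R, ?_⟩
  intro z hz
  simp only [Set.mem_setOf_eq] at hz
  -- sup attained
  obtain ⟨x1, _, hx1⟩ := Finset.exists_max_image Finset.univ (fun x => |z.1 x|)
    Finset.univ_nonempty
  obtain ⟨x2, _, hx2⟩ := Finset.exists_max_image Finset.univ (fun x => |z.2 x|)
    Finset.univ_nonempty
  set Nu := |z.1 x1| with hNu
  set Nv := |z.2 x2| with hNv
  have hNun : 0 ≤ Nu := abs_nonneg _
  have hNvn : 0 ≤ Nv := abs_nonneg _
  -- lower bound on PhiF
  have hPhi : a1 * Nu ^ p + a2 * Nv ^ q ≤ PhiF w μ h1 h2 m1 m2 p q z := by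
    have := PhiF_lower w μ h1 h2 m1 m2 p q hw hμ hh1 hh2 hp hq z x1 x2
    have e1 : a1 * Nu ^ p ≤ 1 / p * (μ x1 * (h1 x1 * |z.1 x1| ^ p)) := by
      rw [ha1]
      have hle1 : mμ ≤ μ x1 := fmin_le' μ x1
      have hle2 : mh1 ≤ h1 x1 := fmin_le' h1 x1
      have habs : (0:ℝ) ≤ Nu ^ p := Real.rpow_nonneg hNun p
      have hp0 : (0:ℝ) ≤ 1 / p := by positivity
      rw [mul_assoc]
      apply mul_le_mul_of_nonneg_left _ hp0
      nlinarith [mul_le_mul hle1 (mul_le_mul_of_nonneg_right hle2 habs)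
        (by positivity : (0:ℝ) ≤ mh1 * Nu ^ p) (le_of_lt (hμ x1))]
    have e2 : a2 * Nv ^ q ≤ 1 / q * (μ x2 * (h2 x2 * |z.2 x2| ^ q)) := by
      rw [ha2]
      have hle1 : mμ ≤ μ x2 := fmin_le' μ x2
      have hle2 : mh2 ≤ h2 x2 := fmin_le' h2 x2
      have habs : (0:ℝ) ≤ Nv ^ q := Real.rpow_nonneg hNvn q
      have hq0 : (0:ℝ) ≤ 1 / q := by positivity
      rw [mul_assoc]
      apply mul_le_mul_of_nonneg_left _ hq0
      nlinarith [mul_le_mul hle1 (mul_le_mul_of_nonneg_right hle2 habs)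
        (by positivity : (0:ℝ) ≤ mh2 * Nv ^ q) (le_of_lt (hμ x2))]
    linarith
  -- upper bound on PsiF
  have hPsi : PsiF μ F z ≤ C1 * Nu ^ α + C2 * Nv ^ β + C3 := by
    unfold PsiF intV
    have hterm : ∀ x : V, μ x * F x (z.1 x) (z.2 x) ≤
        μ x * |f1 x| * Nu ^ α + μ x * |f2 x| * Nv ^ β + μ x * |g0 x| := by
      intro x
      have hF := hF2 x (z.1 x) (z.2 x)
      have hμx := le_of_lt (hμ x)
      have hb1 : f1 x * |z.1 x| ^ α ≤ |f1 x| * Nu ^ α := by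
        calc f1 x * |z.1 x| ^ α ≤ |f1 x| * |z.1 x| ^ α := by
              apply mul_le_mul_of_nonneg_right (le_abs_self _)
                (Real.rpow_nonneg (abs_nonneg _) α)
          _ ≤ |f1 x| * Nu ^ α := by
              apply mul_le_mul_of_nonneg_left
                (Real.rpow_le_rpow (abs_nonneg _) (hx1 x (Finset.mem_univ x)) hα0) (abs_nonneg _)
      have hb2 : f2 x * |z.2 x| ^ β ≤ |f2 x| * Nv ^ β := by
        calc f2 x * |z.2 x| ^ β ≤ |f2 x| * |z.2 x| ^ β := by
              apply mul_le_mul_of_nonneg_right (le_abs_self _)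
                (Real.rpow_nonneg (abs_nonneg _) β)
          _ ≤ |f2 x| * Nv ^ β := by
              apply mul_le_mul_of_nonneg_left
                (Real.rpow_le_rpow (abs_nonneg _) (hx2 x (Finset.mem_univ x)) hβ0) (abs_nonneg _)
      have hb3 : g0 x ≤ |g0 x| := le_abs_self _
      have : F x (z.1 x) (z.2 x) ≤ |f1 x| * Nu ^ α + |f2 x| * Nv ^ β + |g0 x| := by linarith
      nlinarith [this, hμx]

    calc ∑ x, μ x * F x (z.1 x) (z.2 x) ≤
        ∑ x, (μ x * |f1 x| * Nu ^ α + μ x * |f2 x| * Nv ^ β + μ x * |g0 x|) :=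
          Finset.sum_le_sum fun x _ => hterm x
      _ = C1 * Nu ^ α + C2 * Nv ^ β + C3 := by
          rw [hC1, hC2, hC3]
          rw [Finset.sum_add_distrib, Finset.sum_add_distrib, ← Finset.sum_mul, ← Finset.sum_mul]
  -- combine
  have hlP' : lam * PsiF μ F z ≤ lam * C1 * Nu ^ α + lam * C2 * Nv ^ β + lam * C3 := by
    calc lam * PsiF μ F z ≤ lam * (C1 * Nu ^ α + C2 * Nv ^ β + C3) :=
          mul_le_mul_of_nonneg_left hPsi (le_of_lt hlam)
      _ = lam * C1 * Nu ^ α + lam * C2 * Nv ^ β + lam * C3 := by ring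
  have hEJ : a1 * Nu ^ p - lam * C1 * Nu ^ α + (a2 * Nv ^ q - lam * C2 * Nv ^ β) - lam * C3 ≤ b := by
    have heq : EJ w μ h1 h2 m1 m2 p q lam F z =
        PhiF w μ h1 h2 m1 m2 p q z - lam * PsiF μ F z := rfl
    rw [heq] at hz
    linarith [hPhi, hlP']
  have hNu_bnd : Nu ≤ max T1 (2 * B1 / a1) := by
    apply hbnd1 B1 Nu hNun
    have := hlow2 Nv hNvn
    rw [hB1]
    linarith
  have hNv_bnd : Nv ≤ max T2 (2 * B2 / a2) := by
    apply hbnd2 B2 Nv hNvn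
    have := hlow1 Nu hNun
    rw [hB2]
    linarith
  -- conclude
  have hz1 : ‖z.1‖ ≤ max T1 (2 * B1 / a1) := by
    rw [pi_norm_le_iff_of_nonneg (le_trans (by linarith) hNu_bnd)]
    intro x
    rw [Real.norm_eq_abs]
    exact le_trans (hx1 x (Finset.mem_univ x)) hNu_bnd
  have hz2 : ‖z.2‖ ≤ max T2 (2 * B2 / a2) := by
    rw [pi_norm_le_iff_of_nonneg (le_trans (by linarith) hNv_bnd)]
    intro x
    rw [Real.norm_eq_abs]
    exact le_trans (hx2 x (Finset.mem_univ x)) hNv_bnd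
  rw [Prod.norm_def]
  apply max_le
  · exact le_trans hz1 (le_max_left _ _)
  · exact le_trans hz2 (le_max_right _ _)

end MPaux
end MPaux9


noncomputable section ScaffoldEq
namespace MPaux
lemma Bmp'_eq_Bmp {V : Type*} [Fintype V] (w : V → V → ℝ) (μ : V → ℝ) (m : ℕ) (p : ℝ)
    (u φ : V → ℝ) : Bmp' w μ m p u φ = Bmp w μ m p u φ := rfl
end MPaux
end ScaffoldEq

open MPaux in
/-- Theorem 1.1: three distinct solutions for the poly-Laplacian system on a finite graph. -/
theorem stmt0 {V : Type*} [Fintype V] [Nonempty V]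
    (w : V → V → ℝ) (μ : V → ℝ)
    (hw_symm : ∀ x y, w x y = w y x) (hw_nonneg : ∀ x y, 0 ≤ w x y)
    (hw_diag : ∀ x, w x x = 0) (hμ : ∀ x, 0 < μ x)
    (m1 m2 : ℕ) (hm1 : 1 ≤ m1) (hm2 : 1 ≤ m2)
    (p q : ℝ) (hp : 2 ≤ p) (hq : 2 ≤ q)
    (h1 h2 : V → ℝ) (hh1 : ∀ x, 0 < h1 x) (hh2 : ∀ x, 0 < h2 x)
    (F Fs Ft : V → ℝ → ℝ → ℝ)
    -- (F0): F continuously differentiable in (s,t), with partial derivatives Fs, Ft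
    (hF0 : ∀ x, ContDiff ℝ 1 (fun st : ℝ × ℝ => F x st.1 st.2))
    (hFs : ∀ x s t, HasDerivAt (fun z => F x z t) (Fs x s t) s)
    (hFt : ∀ x s t, HasDerivAt (fun z => F x s z) (Ft x s t) t)
    -- (F1)
    (hF1 : intV μ (fun x => F x 0 0) = 0)
    -- (F2)
    (α β : ℝ) (hα0 : 0 ≤ α) (hαp : α < p) (hβ0 : 0 ≤ β) (hβq : β < q)
    (f1 f2 g : V → ℝ)
    (hF2 : ∀ x s t, F x s t ≤ f1 x * |s| ^ α + f2 x * |t| ^ β + g x)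
    -- (F3)
    (γ1 γ2 δ1 δ2 : ℝ) (hγ1 : 0 < γ1) (hγ2 : 0 < γ2) (hδ1 : 0 < δ1) (hδ2 : 0 < δ2)
    (hδκ1 : δ1 > γ1 * ((1 / p) * intV μ h1) ^ (-(1 / p)))
    (hδκ2 : δ2 > γ2 * ((1 / q) * intV μ h2) ^ (-(1 / q)))
    (Λ1 Λ2 : ℝ)
    (hΛ1 : Λ1 = (γ1 ^ p + γ2 ^ q)⁻¹ *
        sSup {z : ℝ | ∃ x : V, ∃ s t : ℝ,
          |s| ≤ (p * (γ1 ^ p + γ2 ^ q)) ^ (1 / p) /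
                  ((fmin h1) ^ (1 / p) * (fmin μ) ^ (1 / p)) ∧
          |t| ≤ (q * (γ1 ^ p + γ2 ^ q)) ^ (1 / q) /
                  ((fmin h2) ^ (1 / q) * (fmin μ) ^ (1 / q)) ∧
          z = F x s t} * (∑ x, μ x))
    (hΛ2 : Λ2 = fmin (fun x => F x δ1 δ2) * (∑ x, μ x) /
        ((δ1 ^ p / p) * intV μ h1 + (δ2 ^ q / q) * intV μ h2))
    (hF3 : Λ1 < Λ2)
    (lam : ℝ) (hlam : 0 < lam) (hlamΛ2 : 1 < lam * Λ2) (hlamΛ1 : lam * Λ1 < 1) :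
    ∃ u1 v1 u2 v2 u3 v3 : V → ℝ,
      isSolSys w μ h1 h2 m1 m2 p q lam Fs Ft u1 v1 ∧
      isSolSys w μ h1 h2 m1 m2 p q lam Fs Ft u2 v2 ∧
      isSolSys w μ h1 h2 m1 m2 p q lam Fs Ft u3 v3 ∧
      (u1, v1) ≠ (u2, v2) ∧ (u1, v1) ≠ (u3, v3) ∧ (u2, v2) ≠ (u3, v3) := by

  classical
  letI : DecidableEq V := Classical.decEq V
  set J : (V → ℝ) × (V → ℝ) → ℝ := EJ w μ h1 h2 m1 m2 p q lam F with hJdef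
  set Φf : (V → ℝ) × (V → ℝ) → ℝ := PhiF w μ h1 h2 m1 m2 p q with hΦdef
  set D : (V → ℝ) × (V → ℝ) → (V → ℝ) × (V → ℝ) → ℝ :=
    DJ w μ h1 h2 m1 m2 p q lam Fs Ft with hDdef
  have hp0 : (0:ℝ) < p := by linarith
  have hq0 : (0:ℝ) < q := by linarith
  set r : ℝ := γ1 ^ p + γ2 ^ q with hrdef
  have hrpos : 0 < r := by
    have := Real.rpow_pos_of_pos hγ1 p
    have := Real.rpow_pos_of_pos hγ2 q
    rw [hrdef]; linarith
  -- continuity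
  have contJ : Continuous J := cont_EJ w μ h1 h2 m1 m2 p q lam F hp hq hF0
  have contΦ : Continuous Φf := cont_PhiF w μ h1 h2 m1 m2 p q hp hq
  -- box constants
  set A : ℝ := (p * r) ^ (1 / p) / ((fmin h1) ^ (1 / p) * (fmin μ) ^ (1 / p)) with hAdef
  set B : ℝ := (q * r) ^ (1 / q) / ((fmin h2) ^ (1 / q) * (fmin μ) ^ (1 / q)) with hBdef
  have hfm1 : (0:ℝ) < fmin h1 := fmin_pos' h1 hh1
  have hfm2 : (0:ℝ) < fmin h2 := fmin_pos' h2 hh2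
  have hfmμ : (0:ℝ) < fmin μ := fmin_pos' μ hμ
  have hA0 : 0 ≤ A := by
    rw [hAdef]
    apply div_nonneg (Real.rpow_nonneg (by positivity) _)
    positivity
  have hB0 : 0 ≤ B := by
    rw [hBdef]
    apply div_nonneg (Real.rpow_nonneg (by positivity) _)
    positivity
  set S : Set ℝ := {z : ℝ | ∃ x : V, ∃ s t : ℝ, |s| ≤ A ∧ |t| ≤ B ∧ z = F x s t} with hSdef
  have hSne : S.Nonempty := by
    obtain ⟨x0⟩ := (inferInstance : Nonempty V)
    exact ⟨F x0 0 0, x0, 0, 0, by simpa using hA0, by simpa using hB0, rfl⟩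
  have hSbdd : BddAbove S := by
    have hbox : ∀ x : V, ∃ Cb : ℝ, ∀ s t : ℝ, |s| ≤ A → |t| ≤ B → F x s t ≤ Cb := by
      intro x
      have hcomp : IsCompact ((Set.Icc (-A) A) ×ˢ (Set.Icc (-B) B)) :=
        isCompact_Icc.prod isCompact_Icc
      have hne : ((Set.Icc (-A) A) ×ˢ (Set.Icc (-B) B)).Nonempty :=
        ⟨(0, 0), ⟨⟨by simpa using neg_nonpos.mpr hA0, by simpa using hA0⟩,
          ⟨by simpa using neg_nonpos.mpr hB0, by simpa using hB0⟩⟩⟩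
      obtain ⟨P, _, hmax⟩ := hcomp.exists_isMaxOn hne ((hF0 x).continuous.continuousOn)
      refine ⟨F x P.1 P.2, fun s t hs ht => ?_⟩
      have hmem : ((s, t) : ℝ × ℝ) ∈ (Set.Icc (-A) A) ×ˢ (Set.Icc (-B) B) := by
        obtain ⟨hs1, hs2⟩ := abs_le.mp hs
        obtain ⟨ht1, ht2⟩ := abs_le.mp ht
        exact ⟨⟨hs1, hs2⟩, ⟨ht1, ht2⟩⟩
      exact hmax hmem
    choose Cb hCb using hbox
    refine ⟨Finset.univ.sup' Finset.univ_nonempty Cb, ?_⟩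
    rintro z ⟨x, s, t, hs, ht, rfl⟩
    exact le_trans (hCb x s t hs ht) (Finset.le_sup' Cb (Finset.mem_univ x))
  set M : ℝ := sSup S with hMdef
  have hM_ge : ∀ (x : V) (s t : ℝ), |s| ≤ A → |t| ≤ B → F x s t ≤ M :=
    fun x s t hs ht => le_csSup hSbdd ⟨x, s, t, hs, ht, rfl⟩
  have hMr : Λ1 * r = M * (∑ x, μ x) := by
    have hrne : r ≠ 0 := ne_of_gt hrpos
    rw [hΛ1]
    field_simp
  set ρ : ℝ := r * (1 - lam * Λ1) with hρdef
  have hρpos : 0 < ρ := by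
    rw [hρdef]
    have : 0 < 1 - lam * Λ1 := by linarith
    positivity
  -- sphere estimate
  have hsph : ∀ z, Φf z = r → ρ ≤ J z := by
    intro z hzr
    have hble : ∀ x : V, |z.1 x| ≤ A ∧ |z.2 x| ≤ B := by
      intro x
      have := abs_le_of_PhiF_le w μ h1 h2 m1 m2 p q hw_nonneg hμ hh1 hh2 hp hq r hrpos z
        (le_of_eq hzr) x
      exact this
    have hPsi : PsiF μ F z ≤ M * (∑ x, μ x) := by
      unfold PsiF intV
      calc ∑ x, μ x * F x (z.1 x) (z.2 x) ≤ ∑ x, μ x * M :=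
            Finset.sum_le_sum fun x _ => mul_le_mul_of_nonneg_left
              (hM_ge x _ _ (hble x).1 (hble x).2) (le_of_lt (hμ x))
        _ = M * ∑ x, μ x := by rw [← Finset.sum_mul]; ring
    have h5 : lam * PsiF μ F z ≤ lam * (Λ1 * r) := by
      rw [hMr]
      exact mul_le_mul_of_nonneg_left hPsi (le_of_lt hlam)
    have hJz : J z = r - lam * PsiF μ F z := by
      rw [hJdef]
      show PhiF w μ h1 h2 m1 m2 p q z - lam * PsiF μ F z = r - lam * PsiF μ F z
      rw [← hΦdef, hzr]
    rw [hJz, hρdef]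
    nlinarith [h5]
  -- the point zδ
  set zδ : (V → ℝ) × (V → ℝ) := (fun _ => δ1, fun _ => δ2) with hzδdef
  set Dδ : ℝ := (δ1 ^ p / p) * intV μ h1 + (δ2 ^ q / q) * intV μ h2 with hDδdef
  have hIh1pos : 0 < intV μ h1 :=
    Finset.sum_pos (fun x _ => mul_pos (hμ x) (hh1 x)) Finset.univ_nonempty
  have hIh2pos : 0 < intV μ h2 :=
    Finset.sum_pos (fun x _ => mul_pos (hμ x) (hh2 x)) Finset.univ_nonempty
  have hδ1p : 0 < δ1 ^ p := Real.rpow_pos_of_pos hδ1 p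
  have hδ2q : 0 < δ2 ^ q := Real.rpow_pos_of_pos hδ2 q
  have hDδpos : 0 < Dδ := by
    rw [hDδdef]
    positivity
  have hPhiδ : Φf zδ = Dδ := by
    rw [hΦdef, hDδdef]
    unfold PhiF intV
    have e1 : ∀ x : V, gradm w μ m1 zδ.1 x = 0 := fun x =>
      gradm_const_eq_zero w μ m1 hm1 δ1 x
    have e2 : ∀ x : V, gradm w μ m2 zδ.2 x = 0 := fun x =>
      gradm_const_eq_zero w μ m2 hm2 δ2 x
    have habs1 : ∀ x : V, |zδ.1 x| = δ1 := fun x => abs_of_pos hδ1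
    have habs2 : ∀ x : V, |zδ.2 x| = δ2 := fun x => abs_of_pos hδ2
    calc (1 / p) * ∑ x, μ x * (gradm w μ m1 zδ.1 x ^ p + h1 x * |zδ.1 x| ^ p) +
          (1 / q) * ∑ x, μ x * (gradm w μ m2 zδ.2 x ^ q + h2 x * |zδ.2 x| ^ q)
        = (1 / p) * ∑ x, μ x * (h1 x * δ1 ^ p) +
          (1 / q) * ∑ x, μ x * (h2 x * δ2 ^ q) := by
          congr 1
          · congr 1
            apply Finset.sum_congr rfl
            intro x _
            rw [e1 x, habs1 x, Real.zero_rpow (ne_of_gt hp0), zero_add]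
          · congr 1
            apply Finset.sum_congr rfl
            intro x _
            rw [e2 x, habs2 x, Real.zero_rpow (ne_of_gt hq0), zero_add]
      _ = (δ1 ^ p / p) * ∑ x, μ x * h1 x + (δ2 ^ q / q) * ∑ x, μ x * h2 x := by
          rw [Finset.mul_sum, Finset.mul_sum, Finset.mul_sum, Finset.mul_sum]
          congr 1
          · apply Finset.sum_congr rfl; intro x _; ring
          · apply Finset.sum_congr rfl; intro x _; ring
  have hrD : r < Dδ := by
    have hTp : (0:ℝ) < 1 / p * intV μ h1 := by positivity
    have hTq : (0:ℝ) < 1 / q * intV μ h2 := by positivity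
    have key1 : γ1 ^ p < δ1 ^ p * (1 / p * intV μ h1) := by
      have h2' : (γ1 * ((1 / p) * intV μ h1) ^ (-(1 / p))) ^ p < δ1 ^ p :=
        Real.rpow_lt_rpow (by positivity) hδκ1 hp0
      rw [Real.mul_rpow (le_of_lt hγ1) (Real.rpow_nonneg (le_of_lt hTp) _)] at h2'
      rw [← Real.rpow_mul (le_of_lt hTp)] at h2'
      rw [show -(1 / p) * p = -1 by field_simp, Real.rpow_neg_one] at h2'
      have h3 : γ1 ^ p * (1 / p * intV μ h1)⁻¹ * (1 / p * intV μ h1) = γ1 ^ p := by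
        field_simp
      nlinarith [mul_lt_mul_of_pos_right h2' hTp]
    have key2 : γ2 ^ q < δ2 ^ q * (1 / q * intV μ h2) := by
      have h2' : (γ2 * ((1 / q) * intV μ h2) ^ (-(1 / q))) ^ q < δ2 ^ q :=
        Real.rpow_lt_rpow (by positivity) hδκ2 hq0
      rw [Real.mul_rpow (le_of_lt hγ2) (Real.rpow_nonneg (le_of_lt hTq) _)] at h2'
      rw [← Real.rpow_mul (le_of_lt hTq)] at h2'
      rw [show -(1 / q) * q = -1 by field_simp, Real.rpow_neg_one] at h2'
      have h3 : γ2 ^ q * (1 / q * intV μ h2)⁻¹ * (1 / q * intV μ h2) = γ2 ^ q := by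
        field_simp
      nlinarith [mul_lt_mul_of_pos_right h2' hTq]
    have e1 : δ1 ^ p / p * intV μ h1 = δ1 ^ p * (1 / p * intV μ h1) := by ring
    have e2 : δ2 ^ q / q * intV μ h2 = δ2 ^ q * (1 / q * intV μ h2) := by ring
    rw [hDδdef, hrdef, e1, e2]
    linarith
  have hJδ : J zδ < 0 := by
    have hfminF : fmin (fun x => F x δ1 δ2) * (∑ x, μ x) = Λ2 * Dδ := by
      rw [hΛ2, hDδdef]
      field_simp
    have hPsiδ : Λ2 * Dδ ≤ PsiF μ F zδ := by
      rw [← hfminF]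
      unfold PsiF intV
      have : ∀ x : V, fmin (fun x => F x δ1 δ2) ≤ F x (zδ.1 x) (zδ.2 x) := by
        intro x
        exact fmin_le' (fun x => F x δ1 δ2) x
      calc fmin (fun x => F x δ1 δ2) * ∑ x, μ x = ∑ x, μ x * fmin (fun x => F x δ1 δ2) := by
            rw [← Finset.sum_mul]; ring
        _ ≤ ∑ x, μ x * F x (zδ.1 x) (zδ.2 x) :=
            Finset.sum_le_sum fun x _ => mul_le_mul_of_nonneg_left (this x) (le_of_lt (hμ x))
    have hJzδ : J zδ = Dδ - lam * PsiF μ F zδ := by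
      rw [hJdef]
      show PhiF w μ h1 h2 m1 m2 p q zδ - lam * PsiF μ F zδ = Dδ - lam * PsiF μ F zδ
      rw [← hΦdef, hPhiδ]
    rw [hJzδ]
    have h6 : lam * (Λ2 * Dδ) ≤ lam * PsiF μ F zδ :=
      mul_le_mul_of_nonneg_left hPsiδ (le_of_lt hlam)
    nlinarith [h6]
  -- J(0) = 0
  have hΦ0 : Φf (0 : (V → ℝ) × (V → ℝ)) = 0 := by
    rw [hΦdef]
    unfold PhiF intV
    have e1 : ∀ x : V, gradm w μ m1 (0 : (V → ℝ) × (V → ℝ)).1 x = 0 := fun x =>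
      gradm_zero_eq_zero w μ m1 hm1 x
    have e2 : ∀ x : V, gradm w μ m2 (0 : (V → ℝ) × (V → ℝ)).2 x = 0 := fun x =>
      gradm_zero_eq_zero w μ m2 hm2 x
    have : ∀ x : V, μ x * (gradm w μ m1 (0 : (V → ℝ) × (V → ℝ)).1 x ^ p +
        h1 x * |(0 : (V → ℝ) × (V → ℝ)).1 x| ^ p) = 0 := by
      intro x
      rw [e1 x]
      simp [Real.zero_rpow (ne_of_gt hp0)]
    rw [Finset.sum_congr rfl fun x _ => this x]
    have : ∀ x : V, μ x * (gradm w μ m2 (0 : (V → ℝ) × (V → ℝ)).2 x ^ q +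
        h2 x * |(0 : (V → ℝ) × (V → ℝ)).2 x| ^ q) = 0 := by
      intro x
      rw [e2 x]
      simp [Real.zero_rpow (ne_of_gt hq0)]
    rw [Finset.sum_congr rfl fun x _ => this x]
    simp
  have hJ0 : J (0 : (V → ℝ) × (V → ℝ)) = 0 := by
    rw [hJdef]
    show PhiF w μ h1 h2 m1 m2 p q 0 - lam * PsiF μ F 0 = 0
    rw [← hΦdef, hΦ0]
    have : PsiF μ F (0 : (V → ℝ) × (V → ℝ)) = intV μ (fun x => F x 0 0) := rfl
    rw [this, hF1]
    ring
  -- gradient map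
  set gmap : (V → ℝ) × (V → ℝ) → (V → ℝ) × (V → ℝ) := fun z =>
    (fun x => D z ((Pi.single x 1 : V → ℝ), (0 : V → ℝ)),
     fun x => D z ((0 : V → ℝ), (Pi.single x 1 : V → ℝ))) with hgmapdef
  set ip : (V → ℝ) × (V → ℝ) → (V → ℝ) × (V → ℝ) → ℝ := fun a b =>
    ∑ x, a.1 x * b.1 x + ∑ x, a.2 x * b.2 x with hipdef
  have hip_repr : ∀ z ξ, D z ξ = ip (gmap z) ξ := by
    intro z ξ
    rw [hDdef, DJ_repr w μ h1 h2 m1 m2 p q lam Fs Ft z ξ]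
    rw [hipdef, hgmapdef]
    simp only
    rw [Finset.sum_add_distrib]
    congr 1
    · exact Finset.sum_congr rfl fun x _ => mul_comm _ _
    · exact Finset.sum_congr rfl fun x _ => mul_comm _ _
  have hgrad : ∀ (z ξ : (V → ℝ) × (V → ℝ)) (t : ℝ),
      HasDerivAt (fun s : ℝ => J (z + s • ξ)) (ip (gmap (z + t • ξ)) ξ) t := by
    intro z ξ t
    rw [← hip_repr]
    exact hasDerivAt_EJ w μ h1 h2 m1 m2 p q lam F Fs Ft hw_nonneg hμ hm1 hm2 hp hq
      hF0 hFs hFt z ξ t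
  have hgc : Continuous gmap := by
    rw [hgmapdef]
    apply Continuous.prodMk
    · apply continuous_pi
      intro x
      exact cont_DJ w μ h1 h2 m1 m2 p q lam F Fs Ft hp hq hF0 hFs hFt _
    · apply continuous_pi
      intro x
      exact cont_DJ w μ h1 h2 m1 m2 p q lam F Fs Ft hp hq hF0 hFs hFt _
  have hipc : Continuous fun ab : ((V → ℝ) × (V → ℝ)) × ((V → ℝ) × (V → ℝ)) =>
      ip ab.1 ab.2 := by
    rw [hipdef]
    apply Continuous.add
    · apply continuous_finset_sum
      intro x _
      exact ((continuous_apply x).comp (continuous_fst.comp continuous_fst)).mul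
        ((continuous_apply x).comp (continuous_fst.comp continuous_snd))
    · apply continuous_finset_sum
      intro x _
      exact ((continuous_apply x).comp (continuous_snd.comp continuous_fst)).mul
        ((continuous_apply x).comp (continuous_snd.comp continuous_snd))
  have hipneg : ∀ a b, ip a (-b) = -(ip a b) := by
    intro a b
    rw [hipdef]
    simp only [Prod.fst_neg, Prod.snd_neg, Pi.neg_apply, mul_neg, Finset.sum_neg_distrib]
    ring
  have hippos : ∀ a, a ≠ 0 → 0 < ip a a := by
    intro a ha
    rw [hipdef]
    simp only
    have hs1 : (0:ℝ) ≤ ∑ x, a.1 x * a.1 x :=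
      Finset.sum_nonneg fun x _ => mul_self_nonneg _
    have hs2 : (0:ℝ) ≤ ∑ x, a.2 x * a.2 x :=
      Finset.sum_nonneg fun x _ => mul_self_nonneg _
    have : a.1 ≠ 0 ∨ a.2 ≠ 0 := by
      by_contra hc
      push_neg at hc
      exact ha (Prod.ext hc.1 hc.2)
    rcases this with h | h
    · obtain ⟨x0, hx0⟩ := Function.ne_iff.mp h
      have hpos : 0 < a.1 x0 * a.1 x0 := mul_self_pos.mpr hx0
      have hle : a.1 x0 * a.1 x0 ≤ ∑ x, a.1 x * a.1 x :=
        Finset.single_le_sum (f := fun x => a.1 x * a.1 x)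
          (fun x _ => mul_self_nonneg _) (Finset.mem_univ x0)
      linarith
    · obtain ⟨x0, hx0⟩ := Function.ne_iff.mp h
      have hpos : 0 < a.2 x0 * a.2 x0 := mul_self_pos.mpr hx0
      have hle : a.2 x0 * a.2 x0 ≤ ∑ x, a.2 x * a.2 x :=
        Finset.single_le_sum (f := fun x => a.2 x * a.2 x)
          (fun x _ => mul_self_nonneg _) (Finset.mem_univ x0)
      linarith
  have hcomp : ∀ b : ℝ, IsCompact {z : (V → ℝ) × (V → ℝ) | J z ≤ b} := by
    intro b
    rw [hJdef]
    exact isCompact_sublevel w μ h1 h2 m1 m2 p q lam F f1 f2 g α β hw_nonneg hμ hh1 hh2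
      hp hq hF0 hα0 hαp hβ0 hβq hlam hF2 b
  -- first local min: on the ball
  have hcompΦ : IsCompact {z : (V → ℝ) × (V → ℝ) | Φf z ≤ r} := by
    apply Metric.isCompact_of_isClosed_isBounded (isClosed_le contΦ continuous_const)
    rw [isBounded_iff_forall_norm_le]
    refine ⟨max A B, ?_⟩
    intro z hz
    simp only [Set.mem_setOf_eq] at hz
    rw [hΦdef] at hz
    have hble := fun x => abs_le_of_PhiF_le w μ h1 h2 m1 m2 p q hw_nonneg hμ hh1 hh2 hp hq
      r hrpos z hz x
    rw [Prod.norm_def]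
    apply max_le
    · rw [pi_norm_le_iff_of_nonneg (le_trans hA0 (le_max_left _ _))]
      intro x
      rw [Real.norm_eq_abs]
      exact le_trans (hble x).1 (le_max_left _ _)
    · rw [pi_norm_le_iff_of_nonneg (le_trans hB0 (le_max_right _ _))]
      intro x
      rw [Real.norm_eq_abs]
      exact le_trans (hble x).2 (le_max_right _ _)
  have h0mem : (0 : (V → ℝ) × (V → ℝ)) ∈ {z : (V → ℝ) × (V → ℝ) | Φf z ≤ r} := by
    simp only [Set.mem_setOf_eq, hΦ0]
    linarith
  obtain ⟨z1, hz1mem, hz1min'⟩ := hcompΦ.exists_isMinOn ⟨0, h0mem⟩ contJ.continuousOn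
  have hz1min : ∀ z, Φf z ≤ r → J z1 ≤ J z := fun z hz => hz1min' hz
  have hz1J : J z1 ≤ 0 := by
    have := hz1min 0 (by rw [hΦ0]; linarith)
    rwa [hJ0] at this
  have hz1le : Φf z1 ≤ r := hz1mem
  have hz1Φ : Φf z1 < r := by
    rcases lt_or_eq_of_le hz1le with h | h
    · exact h
    · exfalso
      have := hsph z1 h
      linarith
  have hz1loc : IsLocalMin J z1 := by
    have hopen : IsOpen {z : (V → ℝ) × (V → ℝ) | Φf z < r} := isOpen_lt contΦ continuous_const
    have hnhds : {z : (V → ℝ) × (V → ℝ) | Φf z < r} ∈ nhds z1 := hopen.mem_nhds hz1Φ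
    exact Filter.eventually_of_mem hnhds fun z hz => hz1min z (le_of_lt hz)
  -- second local min: outside the ball
  set K2 : Set ((V → ℝ) × (V → ℝ)) := {z | J z ≤ J zδ} ∩ {z | r ≤ Φf z} with hK2def
  have hK2comp : IsCompact K2 := (hcomp (J zδ)).of_isClosed_subset
    ((isClosed_le contJ continuous_const).inter (isClosed_le continuous_const contΦ))
    (fun z hz => hz.1)
  have hK2ne : K2.Nonempty := by
    refine ⟨zδ, ?_, ?_⟩
    · show J zδ ≤ J zδ
      exact le_refl _
    · show r ≤ Φf zδ
      rw [hPhiδ]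
      linarith
  obtain ⟨z2, hz2mem, hz2min'⟩ := hK2comp.exists_isMinOn hK2ne contJ.continuousOn
  have hz2min : ∀ z, J z ≤ J zδ → r ≤ Φf z → J z2 ≤ J z := fun z hz1 hz2 => hz2min' ⟨hz1, hz2⟩
  have hz2J : J z2 ≤ J zδ := hz2mem.1
  have hz2le : r ≤ Φf z2 := hz2mem.2
  have hz2Φ : r < Φf z2 := by
    rcases lt_or_eq_of_le hz2le with h | h
    · exact h
    · exfalso
      have := hsph z2 h.symm
      linarith
  have hz2loc : IsLocalMin J z2 := by
    have hopen : IsOpen {z : (V → ℝ) × (V → ℝ) | r < Φf z} := isOpen_lt continuous_const contΦ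
    have hnhds : {z : (V → ℝ) × (V → ℝ) | r < Φf z} ∈ nhds z2 := hopen.mem_nhds hz2Φ
    refine Filter.eventually_of_mem hnhds fun z hz => ?_
    rcases le_or_gt (J z) (J zδ) with h | h
    · exact hz2min z h (le_of_lt hz)
    · linarith
  -- local min => critical
  have hcrit : ∀ z, IsLocalMin J z → ∀ ξ, D z ξ = 0 := by
    intro z hz ξ
    have hc : Continuous fun s : ℝ => z + s • ξ :=
      continuous_const.add (continuous_id.smul continuous_const)
    have ht : Filter.Tendsto (fun s : ℝ => z + s • ξ) (nhds 0) (nhds z) := by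
      have := hc.tendsto 0
      simpa using this
    have hline : IsLocalMin (fun s : ℝ => J (z + s • ξ)) 0 := by
      have hev := ht.eventually hz
      refine hev.mono fun s hs => ?_
      have e : z + (0:ℝ) • ξ = z := by simp
      simpa [e] using hs
    have hder := hgrad z ξ 0
    rw [show z + (0:ℝ) • ξ = z by simp] at hder
    have := hline.hasDerivAt_eq_zero hder
    rw [hip_repr]
    exact this
  -- mountain pass
  obtain ⟨z3, hgz3, hJz3⟩ := mp_abstract J Φf gmap ip contJ contΦ hgc hipc hipneg hippos
    hgrad hcomp z1 z2 r ρ hρpos hz1Φ hz2Φ hsph (by linarith) (by linarith)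
  have hz3crit : ∀ ξ, D z3 ξ = 0 := by
    intro ξ
    rw [hip_repr, hgz3, hipdef]
    simp
  -- solutions
  have hsol : ∀ z : (V → ℝ) × (V → ℝ), (∀ ξ, D z ξ = 0) →
      isSolSys w μ h1 h2 m1 m2 p q lam Fs Ft z.1 z.2 := by
    intro z hz φ1 φ2
    have hz' : ∀ ξ, DJ w μ h1 h2 m1 m2 p q lam Fs Ft z ξ = 0 := by
      intro ξ
      have := hz ξ
      rwa [hDdef] at this
    have hcs := crit_to_sol w μ h1 h2 m1 m2 p q lam Fs Ft z hz' φ1 φ2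
    constructor
    · have := hcs.1
      rwa [Bmp'_eq_Bmp] at this
    · have := hcs.2
      rwa [Bmp'_eq_Bmp] at this
  have hsol1 := hsol z1 (hcrit z1 hz1loc)
  have hsol2 := hsol z2 (hcrit z2 hz2loc)
  have hsol3 := hsol z3 hz3crit
  -- distinctness
  have hne12 : z1 ≠ z2 := by
    intro h
    rw [h] at hz1Φ
    linarith
  have hJz3pos : 0 < J z3 := by linarith
  have hne13 : z1 ≠ z3 := by
    intro h
    rw [h] at hz1J
    linarith
  have hne23 : z2 ≠ z3 := by
    intro h
    rw [h] at hz2J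
    linarith
  have pairne : ∀ (a b : (V → ℝ) × (V → ℝ)), a ≠ b → (a.1, a.2) ≠ (b.1, b.2) := by
    intro a b hab h
    apply hab
    rwa [Prod.mk.eta, Prod.mk.eta] at h
  exact ⟨z1.1, z1.2, z2.1, z2.2, z3.1, z3.2, hsol1, hsol2, hsol3,
    pairne z1 z2 hne12, pairne z1 z3 hne13, pairne z2 z3 hne23⟩
end

section
/- (Lemma 3.2) Let G=(V,E) be a finite graph, m1,m2≥1 integers, p,q≥2, h1,h2:V→(0,∞), and F:V×ℝ²→ℝ with (s,t)↦F(x,s,t) continuous for every x∈V. Suppose condition (F3) holds: there exist γ1,γ2,δ1,δ2>0 with δ1>γ1κ1 and δ2>γ2κ2, where κ1=((1/p)∫_V h1 dμ)^{−1/p} and κ2=((1/q)∫_V h2 dμ)^{−1/q}, such that (γ1^p+γ2^q)^{−1}·(max{F(x,s,t) : x∈V, |s| ≤ (p(γ1^p+γ2^q))^{1/p}/(h_{1,min}^{1/p}μ_min^{1/p}), |t| ≤ (q(γ1^p+γ2^q))^{1/q}/(h_{2,min}^{1/q}μ_min^{1/q})})·|V| < (min_{x∈V}F(x,δ1,δ2))·|V|/((δ1^p/p)∫_V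 h1 dμ + (δ2^q/q)∫_V h2 dμ). Then the constant functions u_{δ1}≡δ1, v_{δ2}≡δ2 satisfy Φ(u_{δ1},v_{δ2}) = (δ1^p/p)∫_V h1 dμ + (δ2^q/q)∫_V h2 dμ ≥ γ1^p+γ2^q and sup{Ψ(u,v) : Φ(u,v) ≤ γ1^p+γ2^q}/(γ1^p+γ2^q) < Ψ(u_{δ1},v_{δ2})/Φ(u_{δ1},v_{δ2}). -/
open Real

noncomputable section
variable {V : Type*}

/-- The functional Φ. -/
def PhiF [Fintype V] (w : V → V → ℝ) (μ h1 h2 : V → ℝ) (m1 m2 : ℕ) (p q : ℝ)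
    (u v : V → ℝ) : ℝ :=
  (1 / p) * wnorm w μ h1 m1 p u ^ p + (1 / q) * wnorm w μ h2 m2 q v ^ q

/-- The functional Ψ. -/
def PsiF [Fintype V] (μ : V → ℝ) (F : V → ℝ → ℝ → ℝ) (u v : V → ℝ) : ℝ :=
  intV μ (fun x => F x (u x) (v x))

end

section helpersX
variable {V : Type*} [Fintype V]

lemma glap_constX (w : V → V → ℝ) (μ : V → ℝ) (c : ℝ) :
    glap w μ (fun _ => c) = fun _ => 0 := by
  funext x; simp [glap]

lemma iter_glap_constX (w : V → V → ℝ) (μ : V → ℝ) (c : ℝ) (k : ℕ) :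
    ∃ c', (glap w μ)^[k] (fun _ => c) = fun _ => c' := by
  induction k with
  | zero => exact ⟨c, rfl⟩
  | succ n ih =>
    obtain ⟨c', hc'⟩ := ih
    exact ⟨0, by rw [Function.iterate_succ_apply', hc', glap_constX]⟩

lemma gradm_constX (w : V → V → ℝ) (μ : V → ℝ) {m : ℕ} (hm : 1 ≤ m) (c : ℝ) (x : V) :
    gradm w μ m (fun _ => c) x = 0 := by
  unfold gradm
  split_ifs with h
  · obtain ⟨c', hc'⟩ := iter_glap_constX w μ c ((m - 1) / 2)
    rw [hc']
    simp [gnorm, ggam]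
  · obtain ⟨j, hj⟩ : ∃ j, m / 2 = j + 1 := ⟨m / 2 - 1, by omega⟩
    obtain ⟨c', hc'⟩ := iter_glap_constX w μ c j
    rw [hj, Function.iterate_succ_apply', hc', glap_constX]
    simp

lemma gradm_nonnegX (w : V → V → ℝ) (μ : V → ℝ) (m : ℕ) (u : V → ℝ) (x : V) :
    0 ≤ gradm w μ m u x := by
  unfold gradm
  split_ifs with h
  · exact Real.sqrt_nonneg _
  · exact abs_nonneg _

lemma intV_nonnegX (μ u : V → ℝ) (hμ : ∀ x, 0 ≤ μ x) (hu : ∀ x, 0 ≤ u x) :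
    0 ≤ intV μ u :=
  Finset.sum_nonneg fun x _ => mul_nonneg (hμ x) (hu x)

lemma wnorm_powX (w : V → V → ℝ) (μ h : V → ℝ) (m : ℕ) {l : ℝ} (hl : 0 < l)
    (hμ : ∀ x, 0 ≤ μ x) (hh : ∀ x, 0 ≤ h x) (u : V → ℝ) :
    wnorm w μ h m l u ^ l
      = intV μ (fun x => gradm w μ m u x ^ l + h x * |u x| ^ l) := by
  have hX : 0 ≤ intV μ (fun x => gradm w μ m u x ^ l + h x * |u x| ^ l) :=
    intV_nonnegX _ _ hμ fun x => add_nonneg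
      (Real.rpow_nonneg (gradm_nonnegX w μ m u x) l)
      (mul_nonneg (hh x) (Real.rpow_nonneg (abs_nonneg _) l))
  unfold wnorm
  rw [← Real.rpow_mul hX, one_div_mul_cancel hl.ne', Real.rpow_one]

lemma wnorm_nonnegX (w : V → V → ℝ) (μ h : V → ℝ) (m : ℕ) (l : ℝ)
    (hμ : ∀ x, 0 ≤ μ x) (hh : ∀ x, 0 ≤ h x) (u : V → ℝ) :
    0 ≤ wnorm w μ h m l u := by
  unfold wnorm
  exact Real.rpow_nonneg (intV_nonnegX _ _ hμ fun x => add_nonneg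
    (Real.rpow_nonneg (gradm_nonnegX w μ m u x) l)
    (mul_nonneg (hh x) (Real.rpow_nonneg (abs_nonneg _) l))) _

lemma wnorm_constX (w : V → V → ℝ) (μ h : V → ℝ) {m : ℕ} (hm : 1 ≤ m)
    {l : ℝ} (hl : 0 < l) (hμ : ∀ x, 0 ≤ μ x) (hh : ∀ x, 0 ≤ h x) (c : ℝ) :
    wnorm w μ h m l (fun _ => c) ^ l = |c| ^ l * intV μ h := by
  rw [wnorm_powX w μ h m hl hμ hh]
  unfold intV
  rw [Finset.mul_sum]
  refine Finset.sum_congr rfl fun x _ => ?_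
  simp only [gradm_constX w μ hm, Real.zero_rpow hl.ne']
  ring

lemma keylemX (p γ δ A : ℝ) (hp : 0 < p) (hγ : 0 < γ) (hA : 0 < A)
    (h : γ * ((1 / p) * A) ^ (-(1 / p)) < δ) : γ ^ p ≤ (δ ^ p / p) * A := by
  have hB : 0 < (1 / p) * A := by positivity
  have h1 : (γ * ((1 / p) * A) ^ (-(1 / p))) ^ p ≤ δ ^ p :=
    Real.rpow_le_rpow (by positivity) h.le hp.le
  rw [Real.mul_rpow hγ.le (Real.rpow_nonneg hB.le _), ← Real.rpow_mul hB.le] at h1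
  have hexp : (-(1 / p)) * p = -1 := by field_simp
  rw [hexp, Real.rpow_neg_one] at h1
  have h2 : γ ^ p = γ ^ p * ((1 / p) * A)⁻¹ * ((1 / p) * A) := by
    field_simp
  calc γ ^ p = γ ^ p * ((1 / p) * A)⁻¹ * ((1 / p) * A) := h2
    _ ≤ δ ^ p * ((1 / p) * A) := mul_le_mul_of_nonneg_right h1 hB.le
    _ = (δ ^ p / p) * A := by ring

lemma absboundX [Nonempty V] (w : V → V → ℝ) (μ h : V → ℝ) (m : ℕ) {l : ℝ}
    (hl : 0 < l) (hμ : ∀ x, 0 < μ x) (hh : ∀ x, 0 < h x) (u : V → ℝ) (c : ℝ)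
    (hW : (1 / l) * wnorm w μ h m l u ^ l ≤ c) (x : V) :
    |u x| ≤ (l * c) ^ (1 / l) / ((fmin h) ^ (1 / l) * (fmin μ) ^ (1 / l)) := by
  have hmh : 0 < fmin h := (Finset.lt_inf'_iff _).mpr fun y _ => hh y
  have hmμ : 0 < fmin μ := (Finset.lt_inf'_iff _).mpr fun y _ => hμ y
  have hμ0 : ∀ y, 0 ≤ μ y := fun y => (hμ y).le
  have hh0 : ∀ y, 0 ≤ h y := fun y => (hh y).le
  set f : V → ℝ := fun y => gradm w μ m u y ^ l + h y * |u y| ^ l with hf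
  have hfnn : ∀ y, 0 ≤ f y := fun y => add_nonneg
    (Real.rpow_nonneg (gradm_nonnegX w μ m u y) l)
    (mul_nonneg (hh0 y) (Real.rpow_nonneg (abs_nonneg _) l))
  have hterm : μ x * f x ≤ intV μ f :=
    Finset.single_le_sum (fun y _ => mul_nonneg (hμ0 y) (hfnn y)) (Finset.mem_univ x)
  have hstep : fmin μ * (fmin h * |u x| ^ l) ≤ μ x * f x := by
    have h1 : fmin h * |u x| ^ l ≤ h x * |u x| ^ l :=
      mul_le_mul_of_nonneg_right (Finset.inf'_le _ (Finset.mem_univ x))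
        (Real.rpow_nonneg (abs_nonneg _) l)
    have h2 : fmin h * |u x| ^ l ≤ f x := by
      have : (0:ℝ) ≤ gradm w μ m u x ^ l :=
        Real.rpow_nonneg (gradm_nonnegX w μ m u x) l
      simp only [hf]; linarith
    calc fmin μ * (fmin h * |u x| ^ l)
        ≤ μ x * (fmin h * |u x| ^ l) := by
          exact mul_le_mul_of_nonneg_right (Finset.inf'_le _ (Finset.mem_univ x))
            (mul_nonneg hmh.le (Real.rpow_nonneg (abs_nonneg _) l))
      _ ≤ μ x * f x := mul_le_mul_of_nonneg_left h2 (hμ0 x)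
  have hWl : wnorm w μ h m l u ^ l ≤ l * c := by
    have h' := mul_le_mul_of_nonneg_left hW hl.le
    calc wnorm w μ h m l u ^ l = l * ((1 / l) * wnorm w μ h m l u ^ l) := by
          field_simp
      _ ≤ l * c := h'
  have hkey : fmin μ * (fmin h * |u x| ^ l) ≤ l * c := by
    rw [wnorm_powX w μ h m hl hμ0 hh0 u] at hWl
    exact le_trans hstep (le_trans hterm hWl)
  have hlc : 0 ≤ l * c :=
    le_trans (mul_nonneg hmμ.le (mul_nonneg hmh.le
      (Real.rpow_nonneg (abs_nonneg _) l))) hkey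
  have hle : |u x| ^ l ≤ (l * c) / (fmin h * fmin μ) := by
    rw [le_div_iff₀ (by positivity)]
    calc |u x| ^ l * (fmin h * fmin μ) = fmin μ * (fmin h * |u x| ^ l) := by ring
      _ ≤ l * c := hkey
  calc |u x| = (|u x| ^ l) ^ (1 / l) := by
        rw [← Real.rpow_mul (abs_nonneg _), mul_one_div_cancel hl.ne', Real.rpow_one]
    _ ≤ ((l * c) / (fmin h * fmin μ)) ^ (1 / l) :=
        Real.rpow_le_rpow (Real.rpow_nonneg (abs_nonneg _) l) hle (by positivity)
    _ = (l * c) ^ (1 / l) / ((fmin h) ^ (1 / l) * (fmin μ) ^ (1 / l)) := by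
        rw [Real.div_rpow hlc (by positivity), Real.mul_rpow hmh.le hmμ.le]

end helpersX

/-- Lemma 3.2. -/
theorem stmt6 {V : Type*} [Fintype V] [Nonempty V]
    (w : V → V → ℝ) (μ : V → ℝ)
    (hw_symm : ∀ x y, w x y = w y x) (hw_nonneg : ∀ x y, 0 ≤ w x y)
    (hw_diag : ∀ x, w x x = 0) (hμ : ∀ x, 0 < μ x)
    (m1 m2 : ℕ) (hm1 : 1 ≤ m1) (hm2 : 1 ≤ m2)
    (p q : ℝ) (hp : 2 ≤ p) (hq : 2 ≤ q)
    (h1 h2 : V → ℝ) (hh1 : ∀ x, 0 < h1 x) (hh2 : ∀ x, 0 < h2 x)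
    (F : V → ℝ → ℝ → ℝ)
    (hFcont : ∀ x, Continuous (fun st : ℝ × ℝ => F x st.1 st.2))
    -- (F3)
    (γ1 γ2 δ1 δ2 : ℝ) (hγ1 : 0 < γ1) (hγ2 : 0 < γ2) (hδ1 : 0 < δ1) (hδ2 : 0 < δ2)
    (hδκ1 : δ1 > γ1 * ((1 / p) * intV μ h1) ^ (-(1 / p)))
    (hδκ2 : δ2 > γ2 * ((1 / q) * intV μ h2) ^ (-(1 / q)))
    (hF3 : (γ1 ^ p + γ2 ^ q)⁻¹ *
        sSup {z : ℝ | ∃ x : V, ∃ s t : ℝ,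
          |s| ≤ (p * (γ1 ^ p + γ2 ^ q)) ^ (1 / p) /
                  ((fmin h1) ^ (1 / p) * (fmin μ) ^ (1 / p)) ∧
          |t| ≤ (q * (γ1 ^ p + γ2 ^ q)) ^ (1 / q) /
                  ((fmin h2) ^ (1 / q) * (fmin μ) ^ (1 / q)) ∧
          z = F x s t} * (∑ x, μ x) <
      fmin (fun x => F x δ1 δ2) * (∑ x, μ x) /
        ((δ1 ^ p / p) * intV μ h1 + (δ2 ^ q / q) * intV μ h2)) :
    PhiF w μ h1 h2 m1 m2 p q (fun _ => δ1) (fun _ => δ2) =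
        (δ1 ^ p / p) * intV μ h1 + (δ2 ^ q / q) * intV μ h2 ∧
    γ1 ^ p + γ2 ^ q ≤ PhiF w μ h1 h2 m1 m2 p q (fun _ => δ1) (fun _ => δ2) ∧
    sSup {z : ℝ | ∃ u v : V → ℝ, PhiF w μ h1 h2 m1 m2 p q u v ≤ γ1 ^ p + γ2 ^ q ∧
          z = PsiF μ F u v} / (γ1 ^ p + γ2 ^ q) <
      PsiF μ F (fun _ => δ1) (fun _ => δ2) /
        PhiF w μ h1 h2 m1 m2 p q (fun _ => δ1) (fun _ => δ2) := by
  have hpp : (0:ℝ) < p := by linarith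
  have hqp : (0:ℝ) < q := by linarith
  have hμ0 : ∀ x, 0 ≤ μ x := fun x => (hμ x).le
  have hh10 : ∀ x, 0 ≤ h1 x := fun x => (hh1 x).le
  have hh20 : ∀ x, 0 ≤ h2 x := fun x => (hh2 x).le
  have hI1 : 0 < intV μ h1 :=
    Finset.sum_pos (fun x _ => mul_pos (hμ x) (hh1 x)) Finset.univ_nonempty
  have hI2 : 0 < intV μ h2 :=
    Finset.sum_pos (fun x _ => mul_pos (hμ x) (hh2 x)) Finset.univ_nonempty
  have hc : 0 < γ1 ^ p + γ2 ^ q :=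
    add_pos (Real.rpow_pos_of_pos hγ1 p) (Real.rpow_pos_of_pos hγ2 q)
  have hsum : 0 < ∑ x, μ x := Finset.sum_pos (fun x _ => hμ x) Finset.univ_nonempty
  -- Phi at constants
  have hw1 : wnorm w μ h1 m1 p (fun _ => δ1) ^ p = δ1 ^ p * intV μ h1 := by
    rw [wnorm_constX w μ h1 hm1 hpp hμ0 hh10 δ1, abs_of_pos hδ1]
  have hw2 : wnorm w μ h2 m2 q (fun _ => δ2) ^ q = δ2 ^ q * intV μ h2 := by
    rw [wnorm_constX w μ h2 hm2 hqp hμ0 hh20 δ2, abs_of_pos hδ2]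
  have hPhiδ : PhiF w μ h1 h2 m1 m2 p q (fun _ => δ1) (fun _ => δ2)
      = (δ1 ^ p / p) * intV μ h1 + (δ2 ^ q / q) * intV μ h2 := by
    unfold PhiF; rw [hw1, hw2]; ring
  -- part 2
  have key1 : γ1 ^ p ≤ (δ1 ^ p / p) * intV μ h1 := keylemX p γ1 δ1 _ hpp hγ1 hI1 hδκ1
  have key2 : γ2 ^ q ≤ (δ2 ^ q / q) * intV μ h2 := keylemX q γ2 δ2 _ hqp hγ2 hI2 hδκ2
  have hpart2 : γ1 ^ p + γ2 ^ q ≤ PhiF w μ h1 h2 m1 m2 p q (fun _ => δ1) (fun _ => δ2) := by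
    rw [hPhiδ]; linarith
  refine ⟨hPhiδ, hpart2, ?_⟩
  -- part 3
  set c := γ1 ^ p + γ2 ^ q with hcdef
  set a := (p * c) ^ (1 / p) / ((fmin h1) ^ (1 / p) * (fmin μ) ^ (1 / p)) with hadef
  set b := (q * c) ^ (1 / q) / ((fmin h2) ^ (1 / q) * (fmin μ) ^ (1 / q)) with hbdef
  set SF := {z : ℝ | ∃ x : V, ∃ s t : ℝ, |s| ≤ a ∧ |t| ≤ b ∧ z = F x s t} with hSFdef
  have hmh1 : 0 < fmin h1 := (Finset.lt_inf'_iff _).mpr fun y _ => hh1 y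
  have hmh2 : 0 < fmin h2 := (Finset.lt_inf'_iff _).mpr fun y _ => hh2 y
  have hmμ : 0 < fmin μ := (Finset.lt_inf'_iff _).mpr fun y _ => hμ y
  have ha0 : 0 ≤ a := by
    apply div_nonneg (Real.rpow_nonneg (by positivity) _) (by positivity)
  have hb0 : 0 ≤ b := by
    apply div_nonneg (Real.rpow_nonneg (by positivity) _) (by positivity)
  -- bounded above
  have hKcpt : IsCompact (Set.Icc (-a) a ×ˢ Set.Icc (-b) b) :=
    isCompact_Icc.prod isCompact_Icc
  have hMbdd : BddAbove SF := by
    refine ⟨fmax (fun x => sSup ((fun st : ℝ × ℝ => F x st.1 st.2) ''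
      (Set.Icc (-a) a ×ˢ Set.Icc (-b) b))), ?_⟩
    rintro z ⟨x, s, t, hs, ht, rfl⟩
    have hmem : (s, t) ∈ Set.Icc (-a) a ×ˢ Set.Icc (-b) b :=
      ⟨Set.mem_Icc.mpr (abs_le.mp hs), Set.mem_Icc.mpr (abs_le.mp ht)⟩
    have h1' : F x s t ≤ sSup ((fun st : ℝ × ℝ => F x st.1 st.2) ''
        (Set.Icc (-a) a ×ˢ Set.Icc (-b) b)) :=
      le_csSup (hKcpt.image (hFcont x)).bddAbove ⟨(s, t), hmem, rfl⟩
    exact le_trans h1' (Finset.le_sup' (fun x => sSup ((fun st : ℝ × ℝ => F x st.1 st.2) ''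
      (Set.Icc (-a) a ×ˢ Set.Icc (-b) b))) (Finset.mem_univ x))
  -- every admissible (u,v) is pointwise bounded
  have hbound : ∀ u v : V → ℝ, PhiF w μ h1 h2 m1 m2 p q u v ≤ c →
      ∀ x, |u x| ≤ a ∧ |v x| ≤ b := by
    intro u v hΦ x
    have hW1nn : 0 ≤ (1 / q) * wnorm w μ h2 m2 q v ^ q :=
      mul_nonneg (by positivity)
        (Real.rpow_nonneg (wnorm_nonnegX w μ h2 m2 q hμ0 hh20 v) q)
    have hW2nn : 0 ≤ (1 / p) * wnorm w μ h1 m1 p u ^ p :=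
      mul_nonneg (by positivity)
        (Real.rpow_nonneg (wnorm_nonnegX w μ h1 m1 p hμ0 hh10 u) p)
    unfold PhiF at hΦ
    constructor
    · exact absboundX w μ h1 m1 hpp hμ hh1 u c (by linarith) x
    · exact absboundX w μ h2 m2 hqp hμ hh2 v c (by linarith) x
  -- Psi bound
  have hPsiLe : ∀ u v : V → ℝ, PhiF w μ h1 h2 m1 m2 p q u v ≤ c →
      PsiF μ F u v ≤ sSup SF * ∑ x, μ x := by
    intro u v hΦ
    have : PsiF μ F u v ≤ ∑ x, μ x * sSup SF := by
      refine Finset.sum_le_sum fun x _ => ?_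
      refine mul_le_mul_of_nonneg_left ?_ (hμ0 x)
      exact le_csSup hMbdd ⟨x, u x, v x, (hbound u v hΦ x).1, (hbound u v hΦ x).2, rfl⟩
    calc PsiF μ F u v ≤ ∑ x, μ x * sSup SF := this
      _ = sSup SF * ∑ x, μ x := by rw [← Finset.sum_mul, mul_comm]
  -- Phi(0,0) = 0
  have hΦ00 : PhiF w μ h1 h2 m1 m2 p q (fun _ => (0:ℝ)) (fun _ => (0:ℝ)) = 0 := by
    unfold PhiF
    rw [wnorm_constX w μ h1 hm1 hpp hμ0 hh10 0, wnorm_constX w μ h2 hm2 hqp hμ0 hh20 0]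
    simp [Real.zero_rpow hpp.ne', Real.zero_rpow hqp.ne']
  have hne : {z : ℝ | ∃ u v : V → ℝ, PhiF w μ h1 h2 m1 m2 p q u v ≤ c ∧
      z = PsiF μ F u v}.Nonempty :=
    ⟨PsiF μ F (fun _ => 0) (fun _ => 0), (fun _ => 0), (fun _ => 0),
      by rw [hΦ00]; exact hc.le, rfl⟩
  have hSle : sSup {z : ℝ | ∃ u v : V → ℝ, PhiF w μ h1 h2 m1 m2 p q u v ≤ c ∧
      z = PsiF μ F u v} ≤ sSup SF * ∑ x, μ x := by
    refine csSup_le hne ?_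
    rintro z ⟨u, v, hΦ, rfl⟩
    exact hPsiLe u v hΦ
  -- Psi at constants
  have hPsiδ : fmin (fun x => F x δ1 δ2) * (∑ x, μ x) ≤
      PsiF μ F (fun _ => δ1) (fun _ => δ2) := by
    have : ∑ x, μ x * fmin (fun x => F x δ1 δ2) ≤ PsiF μ F (fun _ => δ1) (fun _ => δ2) :=
      Finset.sum_le_sum fun x _ => mul_le_mul_of_nonneg_left
        (Finset.inf'_le _ (Finset.mem_univ x)) (hμ0 x)
    calc fmin (fun x => F x δ1 δ2) * (∑ x, μ x)
        = ∑ x, μ x * fmin (fun x => F x δ1 δ2) := by rw [← Finset.sum_mul, mul_comm]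
      _ ≤ _ := this
  have hΦδpos : 0 < (δ1 ^ p / p) * intV μ h1 + (δ2 ^ q / q) * intV μ h2 := by
    calc (0:ℝ) < c := hc
      _ ≤ _ := by linarith
  rw [hPhiδ]
  calc sSup {z : ℝ | ∃ u v : V → ℝ, PhiF w μ h1 h2 m1 m2 p q u v ≤ c ∧
        z = PsiF μ F u v} / c
      ≤ (sSup SF * ∑ x, μ x) / c := by gcongr
    _ = c⁻¹ * sSup SF * (∑ x, μ x) := by rw [div_eq_mul_inv]; ring
    _ < fmin (fun x => F x δ1 δ2) * (∑ x, μ x) /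
        ((δ1 ^ p / p) * intV μ h1 + (δ2 ^ q / q) * intV μ h2) := hF3
    _ ≤ PsiF μ F (fun _ => δ1) (fun _ => δ2) /
        ((δ1 ^ p / p) * intV μ h1 + (δ2 ^ q / q) * intV μ h2) := by gcongr
end

section
/- (Lemma 3.3) Let G=(V,E) be a finite graph, m1,m2≥1 integers, p,q≥2, h1,h2:V→(0,∞), and F:V×ℝ²→ℝ with (s,t)↦F(x,s,t) continuous for every x∈V. Suppose there exist α∈[0,p), β∈[0,q) and f1,f2,g:V→ℝ with F(x,s,t) ≤ f1(x)|s|^α + f2(x)|t|^β + g(x) for all (x,s,t)∈V×ℝ². Then for each λ>0 the functional φ_λ = Φ − λΨ is coercive: for every K∈ℝ there exists R>0 such that ‖u‖_{W^{m1,p}} + ‖v‖_{W^{m2,q}} ≥ R implies Φ(u,v) − λΨ(u,v) ≥ K. -/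
open Real

section AuxLemmas
variable {V : Type*}

private lemma keyCoerc (p α a : ℝ) (hp : 1 ≤ p) (hα0 : 0 ≤ α) (hαp : α < p) (ha : 0 ≤ a) :
    ∃ M : ℝ, 0 ≤ M ∧ ∀ N : ℝ, 0 ≤ N → N / (2*p) - M ≤ (1/p) * N ^ p - a * N ^ α := by
  have hp0 : 0 < p := lt_of_lt_of_le one_pos hp
  set N0 : ℝ := max 1 ((2*a*p) ^ (1/(p-α))) with hN0def
  have hN0 : (1:ℝ) ≤ N0 := le_max_left _ _
  have hN0pos : (0:ℝ) < N0 := lt_of_lt_of_le one_pos hN0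
  refine ⟨N0/(2*p) + a * N0 ^ α, by positivity, ?_⟩
  intro N hN
  rcases le_total N N0 with h | h
  · have h1 : a * N ^ α ≤ a * N0 ^ α :=
      mul_le_mul_of_nonneg_left (Real.rpow_le_rpow hN h hα0) ha
    have h2 : N/(2*p) ≤ N0/(2*p) := by
      apply div_le_div_of_nonneg_right h (by linarith)
    have h3 : 0 ≤ (1/p) * N ^ p := by positivity
    linarith
  · have hN1 : (1:ℝ) ≤ N := le_trans hN0 h
    have hNpos : (0:ℝ) < N := lt_of_lt_of_le one_pos hN1
    have hpa : 0 < p - α := by linarith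
    have hpow : 2*a*p ≤ N ^ (p - α) := by
      have h2 : (2*a*p) ^ (1/(p-α)) ≤ N := le_trans (le_max_right _ _) h
      have h3 : ((2*a*p) ^ (1/(p-α))) ^ (p-α) ≤ N ^ (p-α) :=
        Real.rpow_le_rpow (Real.rpow_nonneg (by positivity) _) h2 hpa.le
      calc 2*a*p = ((2*a*p) ^ (1/(p-α))) ^ (p-α) := by
            rw [← Real.rpow_mul (by positivity), one_div_mul_cancel hpa.ne', Real.rpow_one]
        _ ≤ N ^ (p-α) := h3
    have haN : a * N ^ α * (2*p) ≤ N ^ p := by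
      calc a * N ^ α * (2*p) = (2*a*p) * N ^ α := by ring
        _ ≤ N ^ (p-α) * N ^ α :=
            mul_le_mul_of_nonneg_right hpow (Real.rpow_nonneg hN α)
        _ = N ^ p := by rw [← Real.rpow_add hNpos]; ring_nf
    have hNp : N ≤ N ^ p := by
      calc N = N ^ (1:ℝ) := (Real.rpow_one N).symm
        _ ≤ N ^ p := Real.rpow_le_rpow_of_exponent_le hN1 hp
    have hM : 0 ≤ N0/(2*p) + a * N0 ^ α := by positivity
    have e1 : (1/p) * N ^ p - N ^ p / (2*p) = N ^ p / (2*p) := by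
      field_simp; ring
    have h2p : (0:ℝ) < 2*p := by linarith
    have hd : a * N ^ α ≤ N ^ p / (2*p) := by
      rw [le_div_iff₀ h2p]; exact haN
    have hd2 : N / (2*p) ≤ N ^ p / (2*p) := div_le_div_of_nonneg_right hNp h2p.le
    linarith

private lemma gradm_nonneg [Fintype V] (w : V → V → ℝ) (μ : V → ℝ) (m : ℕ) (u : V → ℝ)
    (x : V) : 0 ≤ gradm w μ m u x := by
  unfold gradm
  split
  · exact Real.sqrt_nonneg _
  · exact abs_nonneg _

private lemma intV_nonneg' [Fintype V] {μ u : V → ℝ} (hμ : ∀ x, 0 ≤ μ x)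
    (hu : ∀ x, 0 ≤ u x) : 0 ≤ intV μ u :=
  Finset.sum_nonneg fun x _ => mul_nonneg (hμ x) (hu x)

private lemma intV_mono' [Fintype V] {μ u v : V → ℝ} (hμ : ∀ x, 0 ≤ μ x)
    (h : ∀ x, u x ≤ v x) : intV μ u ≤ intV μ v :=
  Finset.sum_le_sum fun x _ => mul_le_mul_of_nonneg_left (h x) (hμ x)

private lemma fmin_pos [Fintype V] [Nonempty V] {f : V → ℝ} (hf : ∀ x, 0 < f x) :
    0 < fmin f := by
  unfold fmin
  rw [Finset.lt_inf'_iff]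
  exact fun b _ => hf b

private lemma wnorm_base_nonneg [Fintype V] (w : V → V → ℝ) (μ h : V → ℝ)
    (hμ : ∀ x, 0 < μ x) (hh : ∀ x, 0 < h x) (m : ℕ) (p : ℝ) (u : V → ℝ) :
    0 ≤ intV μ (fun x => gradm w μ m u x ^ p + h x * |u x| ^ p) := by
  apply intV_nonneg' (fun x => (hμ x).le)
  intro x
  have h1 : 0 ≤ gradm w μ m u x ^ p := Real.rpow_nonneg (gradm_nonneg w μ m u x) p
  have h2 : 0 ≤ h x * |u x| ^ p := mul_nonneg (hh x).le (Real.rpow_nonneg (abs_nonneg _) p)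
  linarith

private lemma wnorm_nonneg' [Fintype V] (w : V → V → ℝ) (μ h : V → ℝ)
    (hμ : ∀ x, 0 < μ x) (hh : ∀ x, 0 < h x) (m : ℕ) (p : ℝ) (u : V → ℝ) :
    0 ≤ wnorm w μ h m p u :=
  Real.rpow_nonneg (wnorm_base_nonneg w μ h hμ hh m p u) _

private lemma point_bound [Fintype V] [Nonempty V] (w : V → V → ℝ) (μ h : V → ℝ)
    (hμ : ∀ x, 0 < μ x) (hh : ∀ x, 0 < h x) (m : ℕ) (p : ℝ) (hp : 0 < p)
    (u : V → ℝ) (x : V) :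
    |u x| ≤ (1 / fmin (fun y => μ y * h y)) ^ (1/p) * wnorm w μ h m p u := by
  set c : ℝ := fmin (fun y => μ y * h y) with hcdef
  have hc : 0 < c := fmin_pos (fun y => mul_pos (hμ y) (hh y))
  set S : ℝ := intV μ (fun y => gradm w μ m u y ^ p + h y * |u y| ^ p) with hSdef
  have hS0 : 0 ≤ S := wnorm_base_nonneg w μ h hμ hh m p u
  have hcx : c ≤ μ x * h x := Finset.inf'_le _ (Finset.mem_univ x)
  have hg : 0 ≤ gradm w μ m u x ^ p := Real.rpow_nonneg (gradm_nonneg w μ m u x) p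
  have hup : 0 ≤ |u x| ^ p := Real.rpow_nonneg (abs_nonneg _) p
  have h1 : c * |u x| ^ p ≤ S := by
    calc c * |u x| ^ p ≤ (μ x * h x) * |u x| ^ p := mul_le_mul_of_nonneg_right hcx hup
      _ ≤ μ x * (gradm w μ m u x ^ p + h x * |u x| ^ p) := by nlinarith [(hμ x).le]
      _ ≤ S := by
          apply Finset.single_le_sum
            (f := fun y => μ y * (gradm w μ m u y ^ p + h y * |u y| ^ p))
          · intro i _
            have hgi : 0 ≤ gradm w μ m u i ^ p := Real.rpow_nonneg (gradm_nonneg w μ m u i) p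
            have hui : 0 ≤ h i * |u i| ^ p :=
              mul_nonneg (hh i).le (Real.rpow_nonneg (abs_nonneg _) p)
            exact mul_nonneg (hμ i).le (by linarith)
          · exact Finset.mem_univ x
  have h2 : |u x| ^ p ≤ S / c := by
    rw [le_div_iff₀ hc, mul_comm]; exact h1
  have h3 : (|u x| ^ p) ^ (1/p) ≤ (S / c) ^ (1/p) :=
    Real.rpow_le_rpow hup h2 (by positivity)
  have h4 : (|u x| ^ p) ^ (1/p) = |u x| := by
    rw [← Real.rpow_mul (abs_nonneg _), mul_one_div, div_self hp.ne', Real.rpow_one]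
  have h5 : (S / c) ^ (1/p) = (1/c) ^ (1/p) * S ^ (1/p) := by
    rw [div_eq_mul_one_div, Real.mul_rpow hS0 (by positivity), mul_comm]
  have h6 : wnorm w μ h m p u = S ^ (1/p) := rfl
  rw [h6, ← h5, ← h4]
  exact h3

end AuxLemmas

/-- Lemma 3.3: coercivity of `Φ − λΨ` on a finite graph. -/
theorem stmt7 {V : Type*} [Fintype V] [Nonempty V]
    (w : V → V → ℝ) (μ : V → ℝ)
    (hw_symm : ∀ x y, w x y = w y x) (hw_nonneg : ∀ x y, 0 ≤ w x y)
    (hw_diag : ∀ x, w x x = 0) (hμ : ∀ x, 0 < μ x)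
    (m1 m2 : ℕ) (hm1 : 1 ≤ m1) (hm2 : 1 ≤ m2)
    (p q : ℝ) (hp : 2 ≤ p) (hq : 2 ≤ q)
    (h1 h2 : V → ℝ) (hh1 : ∀ x, 0 < h1 x) (hh2 : ∀ x, 0 < h2 x)
    (F : V → ℝ → ℝ → ℝ)
    (hFcont : ∀ x, Continuous (fun st : ℝ × ℝ => F x st.1 st.2))
    (α β : ℝ) (hα0 : 0 ≤ α) (hαp : α < p) (hβ0 : 0 ≤ β) (hβq : β < q)
    (f1 f2 g : V → ℝ)
    (hF2 : ∀ x s t, F x s t ≤ f1 x * |s| ^ α + f2 x * |t| ^ β + g x)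
    (lam : ℝ) (hlam : 0 < lam) :
    ∀ K : ℝ, ∃ R : ℝ, 0 < R ∧ ∀ u v : V → ℝ,
      R ≤ wnorm w μ h1 m1 p u + wnorm w μ h2 m2 q v →
      K ≤ PhiF w μ h1 h2 m1 m2 p q u v - lam * PsiF μ F u v := by
  have hp0 : (0:ℝ) < p := by linarith
  have hq0 : (0:ℝ) < q := by linarith
  intro K
  -- constants
  set c1 : ℝ := (1 / fmin (fun y => μ y * h1 y)) ^ (1/p) with hc1def
  set c2 : ℝ := (1 / fmin (fun y => μ y * h2 y)) ^ (1/q) with hc2def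
  have hmm1 : 0 < fmin (fun y => μ y * h1 y) := fmin_pos (fun y => mul_pos (hμ y) (hh1 y))
  have hmm2 : 0 < fmin (fun y => μ y * h2 y) := fmin_pos (fun y => mul_pos (hμ y) (hh2 y))
  have hc1 : 0 ≤ c1 := by rw [hc1def]; positivity
  have hc2 : 0 ≤ c2 := by rw [hc2def]; positivity
  set A : ℝ := ∑ x, μ x * max (f1 x) 0 with hAdef
  set B : ℝ := ∑ x, μ x * max (f2 x) 0 with hBdef
  set C : ℝ := ∑ x, μ x * g x with hCdef
  have hA : 0 ≤ A := by
    rw [hAdef]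
    exact Finset.sum_nonneg fun x _ => mul_nonneg (hμ x).le (le_max_right _ _)
  have hB : 0 ≤ B := by
    rw [hBdef]
    exact Finset.sum_nonneg fun x _ => mul_nonneg (hμ x).le (le_max_right _ _)
  have ha : 0 ≤ lam * A * c1 ^ α :=
    mul_nonneg (mul_nonneg hlam.le hA) (Real.rpow_nonneg hc1 α)
  have hb : 0 ≤ lam * B * c2 ^ β :=
    mul_nonneg (mul_nonneg hlam.le hB) (Real.rpow_nonneg hc2 β)
  obtain ⟨M1, hM1, hk1⟩ := keyCoerc p α (lam * A * c1 ^ α) (by linarith) hα0 hαp ha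
  obtain ⟨M2, hM2, hk2⟩ := keyCoerc q β (lam * B * c2 ^ β) (by linarith) hβ0 hβq hb
  refine ⟨max 1 (2*(p*q)*(K + (M1 + M2 + lam * C))),
    lt_of_lt_of_le one_pos (le_max_left _ _), ?_⟩
  intro u v hR
  set N1 : ℝ := wnorm w μ h1 m1 p u with hN1def
  set N2 : ℝ := wnorm w μ h2 m2 q v with hN2def
  have hN1 : 0 ≤ N1 := wnorm_nonneg' w μ h1 hμ hh1 m1 p u
  have hN2 : 0 ≤ N2 := wnorm_nonneg' w μ h2 hμ hh2 m2 q v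
  have hub : ∀ x, |u x| ≤ c1 * N1 := fun x => point_bound w μ h1 hμ hh1 m1 p hp0 u x
  have hvb : ∀ x, |v x| ≤ c2 * N2 := fun x => point_bound w μ h2 hμ hh2 m2 q hq0 v x
  have hc1N : 0 ≤ c1 * N1 := mul_nonneg hc1 hN1
  have hc2N : 0 ≤ c2 * N2 := mul_nonneg hc2 hN2
  -- bound on Psi
  have hΨ : PsiF μ F u v ≤ A * (c1*N1) ^ α + B * (c2*N2) ^ β + C := by
    have hpt : ∀ x, F x (u x) (v x) ≤
        max (f1 x) 0 * (c1*N1) ^ α + max (f2 x) 0 * (c2*N2) ^ β + g x := by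
      intro x
      have t1 : |u x| ^ α ≤ (c1*N1) ^ α := Real.rpow_le_rpow (abs_nonneg _) (hub x) hα0
      have t2 : |v x| ^ β ≤ (c2*N2) ^ β := Real.rpow_le_rpow (abs_nonneg _) (hvb x) hβ0
      have s1 : f1 x * |u x| ^ α ≤ max (f1 x) 0 * (c1*N1) ^ α := by
        calc f1 x * |u x| ^ α ≤ max (f1 x) 0 * |u x| ^ α :=
              mul_le_mul_of_nonneg_right (le_max_left _ _) (Real.rpow_nonneg (abs_nonneg _) α)
          _ ≤ max (f1 x) 0 * (c1*N1) ^ α :=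
              mul_le_mul_of_nonneg_left t1 (le_max_right _ _)
      have s2 : f2 x * |v x| ^ β ≤ max (f2 x) 0 * (c2*N2) ^ β := by
        calc f2 x * |v x| ^ β ≤ max (f2 x) 0 * |v x| ^ β :=
              mul_le_mul_of_nonneg_right (le_max_left _ _) (Real.rpow_nonneg (abs_nonneg _) β)
          _ ≤ max (f2 x) 0 * (c2*N2) ^ β :=
              mul_le_mul_of_nonneg_left t2 (le_max_right _ _)
      have := hF2 x (u x) (v x)
      linarith
    have hmono : PsiF μ F u v ≤
        intV μ (fun x => max (f1 x) 0 * (c1*N1) ^ α + max (f2 x) 0 * (c2*N2) ^ β + g x) :=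
      intV_mono' (fun x => (hμ x).le) hpt
    have hEq : intV μ (fun x => max (f1 x) 0 * (c1*N1) ^ α + max (f2 x) 0 * (c2*N2) ^ β + g x)
        = A * (c1*N1) ^ α + B * (c2*N2) ^ β + C := by
      rw [hAdef, hBdef, hCdef, intV, Finset.sum_mul, Finset.sum_mul,
        ← Finset.sum_add_distrib, ← Finset.sum_add_distrib]
      exact Finset.sum_congr rfl fun x _ => by ring
    linarith
  have hmulX : (c1*N1) ^ α = c1 ^ α * N1 ^ α := Real.mul_rpow hc1 hN1
  have hmulY : (c2*N2) ^ β = c2 ^ β * N2 ^ β := Real.mul_rpow hc2 hN2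
  have hlΨ : lam * PsiF μ F u v ≤
      lam * A * c1 ^ α * N1 ^ α + lam * B * c2 ^ β * N2 ^ β + lam * C := by
    have h := mul_le_mul_of_nonneg_left hΨ hlam.le
    rw [hmulX, hmulY] at h
    calc lam * PsiF μ F u v
        ≤ lam * (A * (c1 ^ α * N1 ^ α) + B * (c2 ^ β * N2 ^ β) + C) := h
      _ = lam * A * c1 ^ α * N1 ^ α + lam * B * c2 ^ β * N2 ^ β + lam * C := by ring
  have hΦ : PhiF w μ h1 h2 m1 m2 p q u v = (1/p) * N1 ^ p + (1/q) * N2 ^ q := by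
    rw [hN1def, hN2def, PhiF]
  have hkk1 := hk1 N1 hN1
  have hkk2 := hk2 N2 hN2
  -- combine the division estimates
  have hpq1 : p ≤ p * q := le_mul_of_one_le_right hp0.le (by linarith)
  have hpq2 : q ≤ p * q := le_mul_of_one_le_left hq0.le (by linarith)
  have hpq : (0:ℝ) < 2*(p*q) := by positivity
  have e : (N1+N2)/(2*(p*q)) = N1/(2*(p*q)) + N2/(2*(p*q)) := add_div _ _ _
  have d1 : N1/(2*(p*q)) ≤ N1/(2*p) := by
    gcongr
  have d2 : N2/(2*(p*q)) ≤ N2/(2*q) := by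
    gcongr
  have hdiv : K + (M1 + M2 + lam * C) ≤ (N1+N2)/(2*(p*q)) := by
    rw [le_div_iff₀ hpq]
    have h' : 2*(p*q)*(K + (M1 + M2 + lam * C)) ≤ N1+N2 := le_trans (le_max_right _ _) hR
    linarith [mul_comm (2*(p*q)) (K + (M1 + M2 + lam * C))]
  linarith [hΦ, hkk1, hkk2, hlΨ, d1, d2, e, hdiv]
end
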